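/- For any two forests F and F' on a finite set X, there exists a cherry picking sequence σ for F and F' of length m for some m ≥ |X|. -/

import Mathlib

open scoped Classical

/-- A finite loopless multigraph on an ambient vertex type `V`:
a finite vertex set together with an edge-multiplicity function on unordered pairs. -/
structure Multigraph (V : Type*) where
  verts : Finset V
  edges : Sym2 V → ℕ
  loopless : ∀ v : V, edges s(v, v) = 0
  edge_support : ∀ u v : V, edges s(u, v) ≠ 0 → u ∈ verts

namespace Multigraph

variable {V : Type*} [DecidableEq V]

/-- The degree of a vertex (counting edge multiplicities). -/
def degree (G : Multigraph V) (v : V) : ℕ :=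
  ∑ u ∈ G.verts, G.edges s(v, u)

/-- The number of edges of `G` (counted with multiplicity); by the handshake lemma. -/
def edgeCount (G : Multigraph V) : ℕ :=
  (∑ v ∈ G.verts, G.degree v) / 2

/-- The reticulation number `r(G) = |E| - (|V| - 1)` (cyclomatic number). -/
def reticulation (G : Multigraph V) : ℕ :=
  G.edgeCount + 1 - G.verts.card

def Adj (G : Multigraph V) (u v : V) : Prop := G.edges s(u, v) ≠ 0

def Reach (G : Multigraph V) : V → V → Prop := Relation.ReflTransGen G.Adj

def Connected (G : Multigraph V) : Prop :=
  G.verts.Nonempty ∧ ∀ u ∈ G.verts, ∀ v ∈ G.verts, G.Reach u v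

/-- A simple graph: no multi-edges. -/
def IsSimple (G : Multigraph V) : Prop := ∀ e, G.edges e ≤ 1

/-- A leaf is a vertex of degree at most one. -/
def IsLeaf (G : Multigraph V) (v : V) : Prop := v ∈ G.verts ∧ G.degree v ≤ 1

def leafSet (G : Multigraph V) : Set V := {v | G.IsLeaf v}

/-- A finite graph is acyclic iff every nonempty (induced) subgraph has a
vertex of degree at most one within it. -/
def Acyclic (G : Multigraph V) : Prop :=
  ∀ S ⊆ G.verts, S.Nonempty → ∃ v ∈ S, (∑ u ∈ S, G.edges s(v, u)) ≤ 1

/-- An (unrooted binary) phylogenetic network on `X`: a simple connected graph whose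
leaf set is `X` and in which every non-leaf vertex has degree three. -/
def IsPhyloNetwork (G : Multigraph V) (X : Finset V) : Prop :=
  G.IsSimple ∧ G.Connected ∧ G.leafSet = ↑X ∧
    ∀ v ∈ G.verts, G.degree v ≤ 1 ∨ G.degree v = 3

/-- A phylogenetic tree on `X`: a phylogenetic network on `X` with no cycles. -/
def IsPhyloTree (G : Multigraph V) (X : Finset V) : Prop :=
  G.IsPhyloNetwork X ∧ G.Acyclic

/-- A forest on `X`, regarded as a single graph whose connected components are
the phylogenetic trees of the forest: simple, acyclic, leaf set `X`, all
internal vertices of degree three. -/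
def IsForest (G : Multigraph V) (X : Finset V) : Prop :=
  G.IsSimple ∧ G.Acyclic ∧ G.leafSet = ↑X ∧
    ∀ v ∈ G.verts, G.degree v ≤ 1 ∨ G.degree v = 3

/-- A pseudo-network on `X`: like a phylogenetic network but multi-edges
(of multiplicity exactly two) are allowed. -/
def IsPseudoNetwork (G : Multigraph V) (X : Finset V) : Prop :=
  (∀ e, G.edges e ≤ 2) ∧ G.Connected ∧ G.leafSet = ↑X ∧
    ∀ v ∈ G.verts, G.degree v ≤ 1 ∨ G.degree v = 3

def HasMultiEdge (G : Multigraph V) : Prop := ∃ e, 2 ≤ G.edges e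

def UniqueMultiEdge (G : Multigraph V) : Prop := ∃! e, 2 ≤ G.edges e

def IsSubgraph (H G : Multigraph V) : Prop :=
  H.verts ⊆ G.verts ∧ ∀ e, H.edges e ≤ G.edges e

/-- `G'` is obtained from `G` by subdividing one copy of the edge `{u,v}`
with the new vertex `w`. -/
def SubdividedAt (G : Multigraph V) (u v w : V) (G' : Multigraph V) : Prop :=
  G.edges s(u, v) ≠ 0 ∧ w ∉ G.verts ∧
    G'.verts = insert w G.verts ∧
    ∀ e, G'.edges e =
      (if e = s(u, v) then G.edges e - 1 else G.edges e) +
      (if e = s(u, w) ∨ e = s(w, v) then 1 else 0)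

def SubdivideStep (G G' : Multigraph V) : Prop :=
  ∃ u v w, SubdividedAt G u v w G'

/-- `H` is a subdivision of `T`. -/
def IsSubdivisionOf (H T : Multigraph V) : Prop :=
  Relation.ReflTransGen SubdivideStep T H

/-- `N` displays the tree/forest `F`: some subgraph of `N` is a subdivision of `F`
(for a forest, such a subgraph consists of pairwise vertex-disjoint images of the
trees of the forest). -/
def Displays (N F : Multigraph V) : Prop :=
  ∃ H, IsSubgraph H N ∧ IsSubdivisionOf H F

/-- the list of unordered pairs of consecutive entries of a list. -/
def listEdges : List V → List (Sym2 V)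
  | [] => []
  | [_] => []
  | a :: b :: t => s(a, b) :: listEdges (b :: t)

def IsPathList (G : Multigraph V) (l : List V) (a b : V) : Prop :=
  l.Chain' G.Adj ∧ l.Nodup ∧ l.head? = some a ∧ l.getLast? = some b

/-- In an image `H` (a subdivision of `F` inside a network), the edge `e` of `H`
lies in the image of the edge `{a,b}` of `F`:
`e` lies on a path in `H` from `a` to `b` all of whose internal vertices are
subdivision vertices (not vertices of `F`). -/
def EdgeInImage (F H : Multigraph V) (a b : V) (e : Sym2 V) : Prop :=
  ∃ l : List V, IsPathList H l a b ∧
    (∀ v ∈ l, v = a ∨ v = b ∨ v ∉ F.verts) ∧ e ∈ listEdges l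

def ReachAvoidingEdge (G : Multigraph V) (f : Sym2 V) : V → V → Prop :=
  Relation.ReflTransGen (fun p q => G.edges s(p, q) ≠ 0 ∧ s(p, q) ≠ f)

/-- `{u,v}` is a cut-edge: it is a (simple) edge whose deletion disconnects the graph. -/
def IsCutEdge (G : Multigraph V) (u v : V) : Prop :=
  G.edges s(u, v) = 1 ∧ ¬ G.ReachAvoidingEdge s(u, v) u v

/-- A cut-edge is trivial if it contains a vertex of degree one. -/
def IsTrivialCutEdge (G : Multigraph V) (u v : V) : Prop :=
  G.IsCutEdge u v ∧ (G.degree u ≤ 1 ∨ G.degree v ≤ 1)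

def ReachWithin (G : Multigraph V) (S : Finset V) : V → V → Prop :=
  Relation.ReflTransGen (fun p q => p ∈ S ∧ q ∈ S ∧ G.edges s(p, q) ≠ 0)

def ConnectedOn (G : Multigraph V) (S : Finset V) : Prop :=
  S.Nonempty ∧ ∀ a ∈ S, ∀ b ∈ S, G.ReachWithin S a b

/-- 2-connected: removing any vertex leaves a connected graph. -/
def TwoConnected (G : Multigraph V) : Prop :=
  G.Connected ∧ ∀ v ∈ G.verts, G.ConnectedOn (G.verts.erase v)

def IsSingleEdgeGraph (G : Multigraph V) : Prop :=
  ∃ u v, u ≠ v ∧ G.verts = {u, v} ∧ G.edgeCount = 1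

/-- A blob of `N`: a maximal 2-connected subgraph of `N` that is not an edge. -/
def IsBlob (N B : Multigraph V) : Prop :=
  IsSubgraph B N ∧ B.TwoConnected ∧ ¬ B.IsSingleEdgeGraph ∧
    ∀ B', IsSubgraph B' N → B'.TwoConnected → IsSubgraph B B' → B' = B

/-- The edge `{u,v}` of `N` is incident with the blob `B`:
exactly one endpoint lies in `B`. -/
def EdgeIncidentBlob (N B : Multigraph V) (u v : V) : Prop :=
  N.edges s(u, v) ≠ 0 ∧ ((u ∈ B.verts ∧ v ∉ B.verts) ∨ (v ∈ B.verts ∧ u ∉ B.verts))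

/-- `L(B)`: the set of leaves of `N` incident with the blob `B`. -/
def blobLeaves (N B : Multigraph V) : Set V :=
  {x | N.IsLeaf x ∧ x ∉ B.verts ∧ ∃ u ∈ B.verts, N.edges s(x, u) ≠ 0}

/-- A pendant blob: among the edges of `N` incident with `B`, at most one is a
non-trivial cut-edge and all the others contain a leaf. -/
def IsPendantBlob (N B : Multigraph V) : Prop :=
  IsBlob N B ∧
  (∀ u v, EdgeIncidentBlob N B u v →
      (N.IsLeaf u ∨ N.IsLeaf v) ∨ (N.IsCutEdge u v ∧ ¬ N.IsTrivialCutEdge u v)) ∧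
  (∀ u v u' v', EdgeIncidentBlob N B u v → EdgeIncidentBlob N B u' v' →
      N.IsCutEdge u v → ¬ N.IsTrivialCutEdge u v →
      N.IsCutEdge u' v' → ¬ N.IsTrivialCutEdge u' v' → s(u, v) = s(u', v'))

def IsIsolated (G : Multigraph V) (x : V) : Prop := x ∈ G.verts ∧ G.degree x = 0

/-- Remove an isolated vertex. -/
def RemovedIsolated (G : Multigraph V) (x : V) (G' : Multigraph V) : Prop :=
  G.IsIsolated x ∧ G'.verts = G.verts.erase x ∧ ∀ e, G'.edges e = G.edges e

/-- Suppress a degree-two vertex `w` with two distinct neighbours `a,b`: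
remove `w` and join `a` and `b` by a new edge. -/
def SuppressedVertex (G : Multigraph V) (w : V) (G' : Multigraph V) : Prop :=
  ∃ a b, a ≠ b ∧ G.edges s(w, a) ≠ 0 ∧ G.edges s(w, b) ≠ 0 ∧ G.degree w = 2 ∧
    G'.verts = G.verts.erase w ∧
    ∀ e, G'.edges e =
      if e = s(a, b) then G.edges s(a, b) + 1
      else if w ∈ e then 0 else G.edges e

def MaybeSuppressed (G : Multigraph V) (w : V) (G' : Multigraph V) : Prop :=
  (G.degree w ≠ 2 ∧ G' = G) ∨ SuppressedVertex G w G'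

/-- Delete one copy of the edge `{u,v}` (no suppression). -/
def DeletedEdge (G : Multigraph V) (u v : V) (G' : Multigraph V) : Prop :=
  G.edges s(u, v) ≠ 0 ∧ G'.verts = G.verts ∧
    ∀ e, G'.edges e = if e = s(u, v) then G.edges e - 1 else G.edges e

/-- `G' = G − e` for the edge `e = {u,v}`: delete the edge and suppress any
resulting degree-two vertices. -/
def RemovedEdge (G : Multigraph V) (u v : V) (G' : Multigraph V) : Prop :=
  ∃ G₁ G₂, DeletedEdge G u v G₁ ∧ MaybeSuppressed G₁ u G₂ ∧ MaybeSuppressed G₂ v G'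

/-- `G' = G − x` for a leaf `x`: delete `x` (and its pendant edge, if any)
and suppress the resulting degree-two vertex (if any). -/
def RemovedLeaf (G : Multigraph V) (x : V) (G' : Multigraph V) : Prop :=
  RemovedIsolated G x G' ∨
  (∃ u G₁ G₂, G.degree x = 1 ∧ G.edges s(x, u) ≠ 0 ∧
     DeletedEdge G x u G₁ ∧ RemovedIsolated G₁ x G₂ ∧ MaybeSuppressed G₂ u G')

/-- `G' = G − e_z` : removal of the pendant edge of the leaf `z`. -/
def RemovedPendant (G : Multigraph V) (z : V) (G' : Multigraph V) : Prop :=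
  ∃ u, G.degree z = 1 ∧ G.edges s(z, u) ≠ 0 ∧ RemovedEdge G z u G'

/-- A cherry `(x,y)`: two distinct leaves adjacent to a common vertex, or whose
tree is the single edge `{x,y}`. -/
def IsCherry (G : Multigraph V) (x y : V) : Prop :=
  x ≠ y ∧ G.IsLeaf x ∧ G.IsLeaf y ∧
    ((∃ v, G.edges s(x, v) ≠ 0 ∧ G.edges s(y, v) ≠ 0) ∨ G.edges s(x, y) ≠ 0)

def InACherry (G : Multigraph V) (x : V) : Prop := ∃ w, G.IsCherry x w

def ReachAvoidingVertex (G : Multigraph V) (u : V) : V → V → Prop :=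
  Relation.ReflTransGen (fun p q => p ≠ u ∧ q ≠ u ∧ G.edges s(p, q) ≠ 0)

/-- `((x,y),p)` is a proper pendant subtree: `a` is adjacent to the leaves `x,y`;
`b` is adjacent to `a` and to the leaf `p`; the cut-edge `{b,c}` attaches this
subtree to the rest of its tree.  Then `e_p = {p,b}` and `e_{((x,y),p)} = {b,c}`. -/
def PendantCherryTriple (G : Multigraph V) (x y p a b c : V) : Prop :=
  G.IsLeaf x ∧ G.IsLeaf y ∧ G.IsLeaf p ∧
  x ≠ y ∧ x ≠ p ∧ y ≠ p ∧ a ≠ b ∧ c ≠ a ∧ c ≠ p ∧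
  G.edges s(x, a) ≠ 0 ∧ G.edges s(y, a) ≠ 0 ∧ G.edges s(a, b) ≠ 0 ∧
  G.edges s(p, b) ≠ 0 ∧ G.edges s(b, c) ≠ 0

/-- `((x,y),(p,q))` is a proper pendant subtree: `a` is adjacent to leaves `x,y`;
`d` is adjacent to leaves `p,q`; `b` is adjacent to `a`, `d` and (via the cut-edge)
to `c`.  Then `e_p = {p,d}`, `e_q = {q,d}` and `e_{(p,q)} = {d,b}`. -/
def PendantDoubleCherry (G : Multigraph V) (x y p q a d b c : V) : Prop :=
  G.IsLeaf x ∧ G.IsLeaf y ∧ G.IsLeaf p ∧ G.IsLeaf q ∧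
  x ≠ y ∧ p ≠ q ∧ x ≠ p ∧ x ≠ q ∧ y ≠ p ∧ y ≠ q ∧ a ≠ d ∧ c ≠ a ∧ c ≠ d ∧
  G.edges s(x, a) ≠ 0 ∧ G.edges s(y, a) ≠ 0 ∧
  G.edges s(p, d) ≠ 0 ∧ G.edges s(q, d) ≠ 0 ∧
  G.edges s(a, b) ≠ 0 ∧ G.edges s(d, b) ≠ 0 ∧ G.edges s(b, c) ≠ 0

/-- Case (C2)(a) of a cherry picking sequence. -/
def CaseC2a (F F' Fn Fn' : Multigraph V) (x y : V) : Prop :=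
  ∃ z, z ≠ y ∧ F'.IsCherry x z ∧ Fn' = F' ∧
    (RemovedPendant F x Fn ∨ RemovedPendant F y Fn ∨
     (∃ p a b c, PendantCherryTriple F x y p a b c ∧
        (RemovedEdge F p b Fn ∨ RemovedEdge F b c Fn)) ∨
     (∃ p q a d b c, PendantDoubleCherry F x y p q a d b c ∧
        (RemovedEdge F p d Fn ∨ RemovedEdge F q d Fn ∨ RemovedEdge F d b Fn)))

/-- Case (C2)(b) of a cherry picking sequence. -/
def CaseC2b (F F' Fn Fn' : Multigraph V) (x y : V) : Prop :=
  F'.Reach x y ∧ ¬ F'.InACherry x ∧ ¬ F'.InACherry y ∧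
    ((Fn' = F' ∧ (RemovedPendant F x Fn ∨ RemovedPendant F y Fn)) ∨
     (Fn = F ∧ ∃ u w, F'.edges s(x, u) ≠ 0 ∧ F'.edges s(u, w) ≠ 0 ∧ w ≠ x ∧
        ¬ F'.ReachAvoidingVertex u w y ∧ RemovedEdge F' u w Fn'))

/-- Case (C2)(c) of a cherry picking sequence. -/
def CaseC2c (F F' Fn Fn' : Multigraph V) (x y : V) : Prop :=
  ¬ F'.Reach x y ∧ ¬ F'.IsIsolated x ∧ ¬ F'.IsIsolated y ∧
    ¬ F'.InACherry x ∧ ¬ F'.InACherry y ∧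
    Fn' = F' ∧ (RemovedPendant F x Fn ∨ RemovedPendant F y Fn)

def C2half (F F' Fn Fn' : Multigraph V) (x : V) : Prop :=
  ∃ y, F.IsCherry x y ∧
    (CaseC2a F F' Fn Fn' x y ∨ CaseC2b F F' Fn Fn' x y ∨ CaseC2c F F' Fn Fn' x y)

/-- Case (C1): `(x,y)` is a cherry of both forests, and `x` is removed from both. -/
def CaseC1 (F F' Fn Fn' : Multigraph V) (x : V) : Prop :=
  ∃ y, F.IsCherry x y ∧ F'.IsCherry x y ∧ RemovedLeaf F x Fn ∧ RemovedLeaf F' x Fn'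

/-- Case (C2), including the variant with the roles of the two forests reversed. -/
def CaseC2 (F F' Fn Fn' : Multigraph V) (x : V) : Prop :=
  C2half F F' Fn Fn' x ∨ C2half F' F Fn' Fn x

/-- Case (C3): `x` is a single-vertex component of one of the forests,
and `x` is removed from both. -/
def CaseC3 (F F' Fn Fn' : Multigraph V) (x : V) : Prop :=
  (F.IsIsolated x ∨ F'.IsIsolated x) ∧ RemovedLeaf F x Fn ∧ RemovedLeaf F' x Fn'

/-- One step of a cherry picking sequence: precisely one of the cases
(C1), (C2), (C3) holds. -/
def CPStep (F F' Fn Fn' : Multigraph V) (x : V) : Prop :=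
  (CaseC1 F F' Fn Fn' x ∧ ¬ CaseC2 F F' Fn Fn' x ∧ ¬ CaseC3 F F' Fn Fn' x) ∨
  (¬ CaseC1 F F' Fn Fn' x ∧ CaseC2 F F' Fn Fn' x ∧ ¬ CaseC3 F F' Fn Fn' x) ∨
  (¬ CaseC1 F F' Fn Fn' x ∧ ¬ CaseC2 F F' Fn Fn' x ∧ CaseC3 F F' Fn Fn' x)

def IsSingleVertexGraph (G : Multigraph V) (x : V) : Prop :=
  G.verts = {x} ∧ ∀ e, G.edges e = 0

/-- `(xs 0, xs 1, …, xs (m-1))`, together with the interpolating forests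
`Fs i`, `Fs' i`, is a cherry picking sequence (of length `m`) for `F` and `F'`. -/
def IsCPS (X : Finset V) (F F' : Multigraph V) (m : ℕ) (xs : ℕ → V)
    (Fs Fs' : ℕ → Multigraph V) : Prop :=
  1 ≤ m ∧ X.card ≤ m ∧ (∀ i < m, xs i ∈ X) ∧
  Fs 0 = F ∧ Fs' 0 = F' ∧
  IsSingleVertexGraph (Fs (m - 1)) (xs (m - 1)) ∧
  IsSingleVertexGraph (Fs' (m - 1)) (xs (m - 1)) ∧
  ∀ i, i + 1 < m → CPStep (Fs i) (Fs' i) (Fs (i + 1)) (Fs' (i + 1)) (xs i)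

/-- The weight of a cherry picking sequence: the number of indices at which a
(C2)-reduction is applied. -/
noncomputable def cpsWeight (m : ℕ) (xs : ℕ → V) (Fs Fs' : ℕ → Multigraph V) : ℕ :=
  ((Finset.range (m - 1)).filter fun i =>
    CaseC2 (Fs i) (Fs' i) (Fs (i + 1)) (Fs' (i + 1)) (xs i)).card

/-- The minimum weight of a cherry picking sequence for `F` and `F'`. -/
noncomputable def minCPSWeight (X : Finset V) (F F' : Multigraph V) : ℕ :=
  sInf {k | ∃ m xs Fs Fs', IsCPS X F F' m xs Fs Fs' ∧ cpsWeight m xs Fs Fs' = k}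

/-- The hybrid number of two forests on `X`. -/
noncomputable def hybridNumber (X : Finset V) (F F' : Multigraph V) : ℕ :=
  sInf {k | ∃ N : Multigraph V, N.IsPhyloNetwork X ∧ Displays N F ∧ Displays N F' ∧
    N.reticulation = k}

/-- Add one new edge `{p,q}`. -/
def AddedEdge (G : Multigraph V) (p q : V) (G' : Multigraph V) : Prop :=
  p ≠ q ∧ G'.verts = G.verts ∧
    ∀ e, G'.edges e = if e = s(p, q) then G.edges e + 1 else G.edges e

/-- Preparing an attachment point for a TBR reconnection: either the component is a
single vertex `p` (attach there directly), or a new vertex `p` subdivides an edge. -/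
def AttachPoint (G : Multigraph V) (p : V) (G' : Multigraph V) : Prop :=
  (G.IsIsolated p ∧ G' = G) ∨ (∃ a b, SubdividedAt G a b p G')

/-- A single tree bisection and reconnection (TBR) move: delete an edge, suppress any
resulting degree-two vertices, and reconnect the two resulting trees by a new edge
between a (subdivided) edge of each. -/
def TBRStep (T T' : Multigraph V) : Prop :=
  ∃ u v G G₁ G₂ p q, RemovedEdge T u v G ∧
    AttachPoint G p G₁ ∧ AttachPoint G₁ q G₂ ∧
    ¬ G₂.Reach p q ∧ AddedEdge G₂ p q T'

/-- Isomorphism of leaf-labelled graphs fixing the labels in `X`. -/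
def IsoFixing (G G' : Multigraph V) (X : Finset V) : Prop :=
  ∃ φ : V ≃ V, (∀ x ∈ X, φ x = x) ∧ G.verts.image φ = G'.verts ∧
    ∀ u v : V, G'.edges s(φ u, φ v) = G.edges s(u, v)

/-- The TBR distance between two phylogenetic trees on `X`. -/
noncomputable def tbrDist (X : Finset V) (T T' : Multigraph V) : ℕ :=
  sInf {n | ∃ f : ℕ → Multigraph V, f 0 = T ∧ IsoFixing (f n) T' X ∧
    ∀ i < n, TBRStep (f i) (f (i + 1))}

/-- Suppress a multi-edge `{u,v}` (replace the two parallel edges by one edge) and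
suppress the resulting degree-two vertices `u` and `v`: the other neighbours
`p` of `u` and `q` of `v` get joined by a new edge. -/
def SuppressedMultiEdge (N N' : Multigraph V) : Prop :=
  ∃ u v p q, N.edges s(u, v) = 2 ∧ p ≠ q ∧ p ≠ v ∧ q ≠ u ∧
    N.edges s(u, p) ≠ 0 ∧ N.edges s(v, q) ≠ 0 ∧
    N'.verts = (N.verts.erase u).erase v ∧
    ∀ e, N'.edges e =
      if e = s(p, q) then N.edges s(p, q) + 1
      else if u ∈ e ∨ v ∈ e then 0 else N.edges e

/-- A simplification sequence `N = N_1, …, N_k` (indexed here by `0,…,k-1`):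
distinct pseudo-networks on `X`, each obtained from the previous by suppressing a
multi-edge, ending in a phylogenetic network. -/
def IsSimplificationSeq (N : Multigraph V) (X : Finset V) (k : ℕ)
    (Ns : ℕ → Multigraph V) : Prop :=
  2 ≤ k ∧ Ns 0 = N ∧ (∀ i < k, (Ns i).IsPseudoNetwork X) ∧
  (∀ i j, i < k → j < k → i ≠ j → Ns i ≠ Ns j) ∧
  (∀ i, i + 1 < k → SuppressedMultiEdge (Ns i) (Ns (i + 1))) ∧
  ¬ (Ns (k - 1)).HasMultiEdge

/-- `M = N − B` for a pendant blob `B` with `|L(B)| ≤ 1`, following the definition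
in the paper (two cases, according to whether `L(B)` is empty or a singleton). -/
def RemovedBlob (N B M : Multigraph V) : Prop :=
  (blobLeaves N B = ∅ ∧ ∃ u v w w',
      N.IsCutEdge u v ∧ v ∈ B.verts ∧ u ∉ B.verts ∧
      w ≠ w' ∧ w ∉ B.verts ∧ w' ∉ B.verts ∧ w ≠ u ∧ w' ≠ u ∧
      N.edges s(u, w) ≠ 0 ∧ N.edges s(u, w') ≠ 0 ∧
      ((N.edges s(w, w') = 0 ∧
          M.verts = (N.verts \ B.verts).erase u ∧
          ∀ e, M.edges e =
            if e = s(w, w') then 1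
            else if u ∈ e ∨ ∃ z ∈ B.verts, z ∈ e then 0
            else N.edges e) ∨
       (N.edges s(w, w') ≠ 0 ∧ ∃ u', u' ∉ N.verts ∧
          M.verts = insert u' (N.verts \ B.verts) ∧
          ∀ e, M.edges e =
            if e = s(w, w') then 0
            else if e = s(w, u') ∨ e = s(w', u') ∨ e = s(u, u') then 1
            else if ∃ z ∈ B.verts, z ∈ e then 0
            else N.edges e))) ∨
  (∃ x, blobLeaves N B = {x} ∧
    ((N.verts = B.verts ∪ {x} ∧ M.verts = {x} ∧ ∀ e, M.edges e = 0) ∨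
     (∃ u v, N.IsCutEdge u v ∧ v ∈ B.verts ∧ u ∉ B.verts ∧ u ≠ x ∧
        M.verts = N.verts \ B.verts ∧
        ∀ e, M.edges e =
          if e = s(x, u) then 1
          else if ∃ z ∈ B.verts, z ∈ e then 0
          else N.edges e)))

end Multigraph

section AuxCPS

variable {V : Type*} [DecidableEq V]

set_option linter.unusedSectionVars false

namespace Multigraph

/-- the measure: sum of all degrees -/
def esum (G : Multigraph V) : ℕ := ∑ v ∈ G.verts, G.degree v

lemma edges_comm (G : Multigraph V) (u v : V) : G.edges s(u, v) = G.edges s(v, u) := by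
  rw [Sym2.eq_swap]

lemma mem_left {G : Multigraph V} {u v : V} (h : G.edges s(u, v) ≠ 0) : u ∈ G.verts :=
  G.edge_support u v h

lemma mem_right {G : Multigraph V} {u v : V} (h : G.edges s(u, v) ≠ 0) : v ∈ G.verts :=
  G.edge_support v u (by rwa [← edges_comm])

lemma edges_ne {G : Multigraph V} {u v : V} (h : G.edges s(u, v) ≠ 0) : u ≠ v := by
  rintro rfl; exact h (G.loopless u)

lemma degree_def (G : Multigraph V) (v : V) : G.degree v = ∑ u ∈ G.verts, G.edges s(v, u) := rfl

lemma isolated_edges {G : Multigraph V} {x : V} (h : G.IsIsolated x) (w : V) :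
    G.edges s(x, w) = 0 := by
  by_contra h'
  have hw : w ∈ G.verts := mem_right h'
  have h0 := h.2
  rw [degree_def] at h0
  exact h' (Finset.sum_eq_zero_iff.mp h0 w hw)

lemma reach_of_isolated {G : Multigraph V} {x y : V} (h : G.IsIsolated x) (hr : G.Reach x y) :
    y = x := by
  rcases Relation.ReflTransGen.cases_head hr with h1 | ⟨c, hc, _⟩
  · exact h1.symm
  · exact absurd (isolated_edges h c) hc

lemma not_cherry_of_isolated {G : Multigraph V} {x y : V} (h : G.IsIsolated x) :
    ¬ G.IsCherry x y := by
  rintro ⟨_, _, _, ⟨v, hv, _⟩ | h2⟩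
  · exact hv (isolated_edges h v)
  · exact h2 (isolated_edges h y)

lemma cherry_symm {G : Multigraph V} {x y : V} (h : G.IsCherry x y) : G.IsCherry y x := by
  obtain ⟨hne, hx, hy, ⟨v, h1, h2⟩ | h3⟩ := h
  · exact ⟨hne.symm, hy, hx, Or.inl ⟨v, h2, h1⟩⟩
  · exact ⟨hne.symm, hy, hx, Or.inr (by rwa [edges_comm])⟩

lemma cherry_not_isolated {G : Multigraph V} {x y : V} (h : G.IsCherry x y) :
    ¬ G.IsIsolated x := fun hi => not_cherry_of_isolated hi h

/-- a vertex of degree 1 has a unique neighbour -/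
lemma degree_one_struct {G : Multigraph V} {x : V} (h : G.degree x = 1) :
    ∃ u, u ∈ G.verts ∧ x ≠ u ∧ G.edges s(x, u) = 1 ∧ ∀ w, w ≠ u → G.edges s(x, w) = 0 := by
  have hne : ∃ u ∈ G.verts, G.edges s(x, u) ≠ 0 := by
    by_contra hc
    push_neg at hc
    rw [degree_def, Finset.sum_eq_zero hc] at h
    exact one_ne_zero h.symm
  obtain ⟨u, hu, hu0⟩ := hne
  have hsum : G.edges s(x, u) + ∑ w ∈ G.verts.erase u, G.edges s(x, w) = 1 := by
    rw [Finset.add_sum_erase _ (fun w => G.edges s(x, w)) hu]; exact h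
  have h1 : G.edges s(x, u) = 1 := by omega
  have h2 : ∑ w ∈ G.verts.erase u, G.edges s(x, w) = 0 := by omega
  refine ⟨u, hu, edges_ne hu0, h1, fun w hw => ?_⟩
  by_cases hwv : w ∈ G.verts
  · exact Finset.sum_eq_zero_iff.mp h2 w (Finset.mem_erase.mpr ⟨hw, hwv⟩)
  · by_contra hc; exact hwv (mem_right hc)

/-- a degree-3 vertex adjacent to `x` has exactly two further neighbours -/
lemma degree_three_struct {G : Multigraph V} {u x : V} (hs : G.IsSimple)
    (h3 : G.degree u = 3) (hx : G.edges s(u, x) ≠ 0) :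
    ∃ a b, a ∈ G.verts ∧ b ∈ G.verts ∧ a ≠ b ∧ a ≠ x ∧ b ≠ x ∧ a ≠ u ∧ b ≠ u ∧
      G.edges s(u, a) = 1 ∧ G.edges s(u, b) = 1 ∧ G.edges s(u, x) = 1 ∧
      ∀ w, w ≠ x → w ≠ a → w ≠ b → G.edges s(u, w) = 0 := by
  have hxv : x ∈ G.verts := mem_right hx
  have hx1 : G.edges s(u, x) = 1 := le_antisymm (hs _) (Nat.one_le_iff_ne_zero.mpr hx)
  have hsum : G.edges s(u, x) + ∑ w ∈ G.verts.erase x, G.edges s(u, w) = 3 := by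
    rw [Finset.add_sum_erase _ (fun w => G.edges s(u, w)) hxv]; exact h3
  have h2 : ∑ w ∈ G.verts.erase x, G.edges s(u, w) = 2 := by omega
  have hne : ∃ a ∈ G.verts.erase x, G.edges s(u, a) ≠ 0 := by
    by_contra hc
    push_neg at hc
    rw [Finset.sum_eq_zero hc] at h2
    omega
  obtain ⟨a, ha, ha0⟩ := hne
  have ha1 : G.edges s(u, a) = 1 := le_antisymm (hs _) (Nat.one_le_iff_ne_zero.mpr ha0)
  have hsum2 : G.edges s(u, a) + ∑ w ∈ (G.verts.erase x).erase a, G.edges s(u, w) = 2 := by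
    rw [Finset.add_sum_erase _ (fun w => G.edges s(u, w)) ha]; exact h2
  have h2b : ∑ w ∈ (G.verts.erase x).erase a, G.edges s(u, w) = 1 := by omega
  have hne2 : ∃ b ∈ (G.verts.erase x).erase a, G.edges s(u, b) ≠ 0 := by
    by_contra hc
    push_neg at hc
    rw [Finset.sum_eq_zero hc] at h2b
    omega
  obtain ⟨b, hb, hb0⟩ := hne2
  have hb1 : G.edges s(u, b) = 1 := le_antisymm (hs _) (Nat.one_le_iff_ne_zero.mpr hb0)
  have hsum3 : G.edges s(u, b) + ∑ w ∈ ((G.verts.erase x).erase a).erase b, G.edges s(u, w) = 1 := by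
    rw [Finset.add_sum_erase _ (fun w => G.edges s(u, w)) hb]; exact h2b
  have h2c : ∑ w ∈ ((G.verts.erase x).erase a).erase b, G.edges s(u, w) = 0 := by omega
  obtain ⟨hba, hb'⟩ := Finset.mem_erase.mp hb
  obtain ⟨hbx, hbv⟩ := Finset.mem_erase.mp hb'
  obtain ⟨hax, hav⟩ := Finset.mem_erase.mp ha
  refine ⟨a, b, hav, hbv, fun h => hba h.symm, hax, hbx,
    fun h => (edges_ne ha0) h.symm, fun h => (edges_ne hb0) h.symm, ha1, hb1, hx1,
    fun w hwx hwa hwb => ?_⟩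
  by_cases hwv : w ∈ G.verts
  · exact Finset.sum_eq_zero_iff.mp h2c w
      (by simp [Finset.mem_erase, hwb, hwa, hwx, hwv])
  · by_contra hc; exact hwv (mem_right hc)

/-- in an acyclic graph, two neighbours of a common vertex are not adjacent -/
lemma no_triangle {G : Multigraph V} (hac : G.Acyclic) {u a b : V}
    (ha : G.edges s(u, a) ≠ 0) (hb : G.edges s(u, b) ≠ 0) (hab : a ≠ b) :
    G.edges s(a, b) = 0 := by
  by_contra hc
  have hua : u ≠ a := edges_ne ha
  have hub : u ≠ b := edges_ne hb
  have hS : ({u, a, b} : Finset V) ⊆ G.verts := by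
    intro v hv
    simp only [Finset.mem_insert, Finset.mem_singleton] at hv
    rcases hv with rfl | rfl | rfl
    exacts [mem_left ha, mem_right ha, mem_right hb]
  obtain ⟨v, hv, hvs⟩ := hac _ hS ⟨u, by simp⟩
  have hexp : ∀ w, (∑ z ∈ ({u, a, b} : Finset V), G.edges s(w, z)) =
      G.edges s(w, u) + G.edges s(w, a) + G.edges s(w, b) := by
    intro w
    rw [Finset.sum_insert (by simp [hua, hub]), Finset.sum_insert (by simp [hab]),
      Finset.sum_singleton]
    ring
  simp only [Finset.mem_insert, Finset.mem_singleton] at hv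
  have pos : ∀ p q : V, G.edges s(p, q) ≠ 0 → 1 ≤ G.edges s(q, p) := by
    intro p q h; rw [← edges_comm]; omega
  rcases hv with hv | hv | hv <;> rw [hv, hexp] at hvs
  · omega
  · have := pos u a ha
    omega
  · have h1 := pos u b hb
    have h2 := pos a b hc
    omega

end Multigraph

end AuxCPS

section AuxCPS2

variable {V : Type*} [DecidableEq V]

set_option linter.unusedSectionVars false

namespace Multigraph

lemma leaf_iff_mem {G : Multigraph V} {Y : Finset V} (hG : G.IsForest Y) (v : V) :
    G.IsLeaf v ↔ v ∈ Y := by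
  have := hG.2.2.1
  rw [Set.ext_iff] at this
  simpa [leafSet] using this v

lemma mem_verts_of_mem {G : Multigraph V} {Y : Finset V} (hG : G.IsForest Y) {v : V}
    (hv : v ∈ Y) : v ∈ G.verts := (((leaf_iff_mem hG v).mpr hv)).1

lemma degree_le_one_of_mem {G : Multigraph V} {Y : Finset V} (hG : G.IsForest Y) {v : V}
    (hv : v ∈ Y) : G.degree v ≤ 1 := (((leaf_iff_mem hG v).mpr hv)).2

/-- every forest without isolated leaves has a cherry `(x, y)` with `x ∈ Y`. -/
lemma cherry_exists {G : Multigraph V} {Y : Finset V} (hG : G.IsForest Y) (hY : Y.Nonempty)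
    (hiso : ∀ v ∈ Y, ¬ G.IsIsolated v) :
    ∃ x y, G.IsCherry x y ∧ x ∈ Y ∧ y ∈ Y := by
  obtain ⟨hs, hac, hleaf, hdeg⟩ := hG
  set I : Finset V := G.verts.filter (fun v => G.degree v = 3) with hI
  by_cases hIe : I.Nonempty
  · obtain ⟨v, hvI, hvs⟩ := hac I (Finset.filter_subset _ _) hIe
    have hv3 : G.degree v = 3 := (Finset.mem_filter.mp hvI).2
    have hvv : v ∈ G.verts := (Finset.mem_filter.mp hvI).1
    have hsplit : G.degree v = (∑ u ∈ I, G.edges s(v, u)) + ∑ u ∈ G.verts \ I, G.edges s(v, u) := by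
      rw [degree_def, ← Finset.sum_union (Finset.disjoint_sdiff),
        Finset.union_sdiff_of_subset (Finset.filter_subset _ _)]
    have h2 : 2 ≤ ∑ u ∈ G.verts \ I, G.edges s(v, u) := by omega
    have hne : ∃ a ∈ G.verts \ I, G.edges s(v, a) ≠ 0 := by
      by_contra hc; push_neg at hc; rw [Finset.sum_eq_zero hc] at h2; omega
    obtain ⟨a, ha, ha0⟩ := hne
    have hsum2 : G.edges s(v, a) + ∑ u ∈ (G.verts \ I).erase a, G.edges s(v, u) =
        ∑ u ∈ G.verts \ I, G.edges s(v, u) := by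
      rw [Finset.add_sum_erase _ (fun u => G.edges s(v, u)) ha]
    have ha1 : G.edges s(v, a) ≤ 1 := hs _
    have hne2 : ∃ b ∈ (G.verts \ I).erase a, G.edges s(v, b) ≠ 0 := by
      by_contra hc; push_neg at hc
      rw [Finset.sum_eq_zero hc] at hsum2; omega
    obtain ⟨b, hb, hb0⟩ := hne2
    have hbne : b ≠ a := (Finset.mem_erase.mp hb).1
    have hbm : b ∈ G.verts \ I := (Finset.mem_erase.mp hb).2
    have leafOf : ∀ w, w ∈ G.verts \ I → G.IsLeaf w := by
      intro w hw
      obtain ⟨hw1, hw2⟩ := Finset.mem_sdiff.mp hw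
      rcases hdeg w hw1 with h | h
      · exact ⟨hw1, h⟩
      · exact absurd (Finset.mem_filter.mpr ⟨hw1, h⟩) hw2
    have hal : G.IsLeaf a := leafOf a ha
    have hbl : G.IsLeaf b := leafOf b hbm
    have hch : G.IsCherry a b :=
      ⟨fun h => hbne h.symm, hal, hbl,
        Or.inl ⟨v, by rwa [edges_comm] at ha0, by rwa [edges_comm] at hb0⟩⟩
    have haY : a ∈ Y := by
      have : a ∈ G.leafSet := hal
      rwa [hleaf, Finset.mem_coe] at this
    have hbY : b ∈ Y := by
      have : b ∈ G.leafSet := hbl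
      rwa [hleaf, Finset.mem_coe] at this
    exact ⟨a, b, hch, haY, hbY⟩
  · -- no internal vertices: every vertex is a leaf
    obtain ⟨x, hx⟩ := hY
    have hxl : G.IsLeaf x := by rw [leaf_iff_mem ⟨hs, hac, hleaf, hdeg⟩ x]; exact hx
    have hxd : G.degree x = 1 := by
      rcases Nat.lt_or_ge (G.degree x) 1 with h | h
      · exact absurd ⟨hxl.1, by omega⟩ (hiso x hx)
      · have := hxl.2
        omega
    obtain ⟨u, huv, hxu, hu1, _⟩ := degree_one_struct hxd
    have hul : G.IsLeaf u := by
      rcases hdeg u huv with h | h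
      · exact ⟨huv, h⟩
      · exact absurd (show u ∈ I from Finset.mem_filter.mpr ⟨huv, h⟩)
          (by simp [Finset.not_nonempty_iff_eq_empty.mp hIe])
    have huY : u ∈ Y := by
      have : u ∈ G.leafSet := hul
      rwa [hleaf, Finset.mem_coe] at this
    exact ⟨x, u, ⟨hxu, hxl, hul, Or.inr (by simp [hu1])⟩, hx, huY⟩

/-- a forest on a singleton label set is a single-vertex graph -/
lemma forest_singleton {G : Multigraph V} {x : V} (hG : G.IsForest {x}) :
    G.IsSingleVertexGraph x := by
  obtain ⟨hs, hac, hleaf, hdeg⟩ := hG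
  have hxl : G.IsLeaf x := by
    rw [leaf_iff_mem ⟨hs, hac, hleaf, hdeg⟩ x]; simp
  have hverts : G.verts = {x} := by
    by_contra hne
    have hSne : (G.verts.erase x).Nonempty := by
      rcases Finset.eq_empty_or_nonempty (G.verts.erase x) with h | h
      · exact absurd (by
          apply Finset.eq_singleton_iff_unique_mem.mpr
          refine ⟨hxl.1, fun y hy => ?_⟩
          by_contra hyx
          exact absurd (Finset.mem_erase.mpr ⟨hyx, hy⟩) (by simp [h])) hne
      · exact h
    obtain ⟨v, hv, hvs⟩ := hac _ (Finset.erase_subset _ _) hSne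
    obtain ⟨hvx, hvv⟩ := Finset.mem_erase.mp hv
    have hv3 : G.degree v = 3 := by
      rcases hdeg v hvv with h | h
      · have : G.IsLeaf v := ⟨hvv, h⟩
        rw [leaf_iff_mem ⟨hs, hac, hleaf, hdeg⟩ v] at this
        simp at this; exact absurd this hvx
      · exact h
    have hsplit : G.edges s(v, x) + ∑ u ∈ G.verts.erase x, G.edges s(v, u) = G.degree v := by
      rw [degree_def, Finset.add_sum_erase _ (fun u => G.edges s(v, u)) hxl.1]
    have := hs s(v, x)
    omega
  refine ⟨hverts, fun e => ?_⟩
  induction e using Sym2.ind with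
  | _ p q =>
    by_contra hc
    have hp : p ∈ G.verts := mem_left hc
    have hq : q ∈ G.verts := mem_right hc
    rw [hverts] at hp hq
    simp only [Finset.mem_singleton] at hp hq
    rw [hp, hq] at hc
    exact hc (G.loopless x)

/-- monotonicity of acyclicity under taking subgraphs -/
lemma acyclic_mono {G H : Multigraph V} (hv : H.verts ⊆ G.verts)
    (he : ∀ e, H.edges e ≤ G.edges e) (hac : G.Acyclic) : H.Acyclic := by
  intro S hS hSne
  obtain ⟨v, hv', hsum⟩ := hac S (hS.trans hv) hSne
  exact ⟨v, hv', le_trans (Finset.sum_le_sum (fun w _ => he _)) hsum⟩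

lemma removedLeaf_verts {G H : Multigraph V} {x : V} (h : RemovedLeaf G x H) :
    x ∈ G.verts ∧ x ∉ H.verts := by
  rcases h with ⟨hiso, hverts, _⟩ | ⟨u, G₁, G₂, hdeg, hne, hdel, hiso, hsup⟩
  · exact ⟨hiso.1, by rw [hverts]; simp⟩
  · refine ⟨mem_left hne, ?_⟩
    have h2 : G₂.verts = G₁.verts.erase x := hiso.2.1
    have h1 : G₁.verts = G.verts := hdel.2.1
    rcases hsup with ⟨_, rfl⟩ | ⟨a, b, _, _, _, _, hverts, _⟩
    · rw [h2]; simp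
    · rw [hverts, h2]
      intro hc
      exact (Finset.mem_erase.mp (Finset.mem_of_mem_erase hc)).1 rfl

lemma not_removedLeaf_self {G : Multigraph V} {x : V} (hx : x ∈ G.verts) :
    ¬ RemovedLeaf G x G := fun h => (removedLeaf_verts h).2 hx

end Multigraph

end AuxCPS2

section AuxCPS3

variable {V : Type*} [DecidableEq V]

set_option linter.unusedSectionVars false

namespace Multigraph

/-- suppressing a degree-two vertex `u` (adding the shortcut edge `{a,b}`)
preserves acyclicity -/
lemma acyclic_suppress {G : Multigraph V} (hac : G.Acyclic) {u a b x : V}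
    (hab : a ≠ b)
    (ha : G.edges s(u, a) ≠ 0) (hb : G.edges s(u, b) ≠ 0) :
    ∀ S ⊆ G.verts.erase u, S.Nonempty →
      ∃ v ∈ S, (∑ w ∈ S,
        (if s(v, w) = s(a, b) then 1 else
          if u ∈ s(v, w) ∨ x ∈ s(v, w) then 0 else G.edges s(v, w))) ≤ 1 := by
  intro S hS hSne
  have hgle : ∀ p q : V, s(p, q) ≠ s(a, b) →
      (if s(p, q) = s(a, b) then 1 else
        if u ∈ s(p, q) ∨ x ∈ s(p, q) then 0 else G.edges s(p, q)) ≤ G.edges s(p, q) := by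
    intro p q hne
    rw [if_neg hne]
    split
    · omega
    · exact le_refl _
  have huS : u ∉ S := fun h => (Finset.mem_erase.mp (hS h)).1 rfl
  by_cases hcase : a ∈ S ∧ b ∈ S
  · obtain ⟨haS, hbS⟩ := hcase
    have hSu : insert u S ⊆ G.verts :=
      Finset.insert_subset (mem_left ha) (hS.trans (Finset.erase_subset _ _))
    obtain ⟨v, hv, hvs⟩ := hac _ hSu ⟨u, Finset.mem_insert_self _ _⟩
    have hvu : v ≠ u := by
      intro heq
      rw [heq] at hvs
      have haI : a ∈ insert u S := Finset.mem_insert_of_mem haS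
      have hbI : b ∈ (insert u S).erase a :=
        Finset.mem_erase.mpr ⟨fun h => hab h.symm, Finset.mem_insert_of_mem hbS⟩
      have h1 : G.edges s(u, a) + ∑ w ∈ (insert u S).erase a, G.edges s(u, w) =
          ∑ w ∈ insert u S, G.edges s(u, w) :=
        Finset.add_sum_erase _ (fun w => G.edges s(u, w)) haI
      have h2 : G.edges s(u, b) + ∑ w ∈ ((insert u S).erase a).erase b, G.edges s(u, w) =
          ∑ w ∈ (insert u S).erase a, G.edges s(u, w) :=
        Finset.add_sum_erase _ (fun w => G.edges s(u, w)) hbI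
      omega
    have hvS : v ∈ S := by
      rcases Finset.mem_insert.mp hv with h | h
      · exact absurd h hvu
      · exact h
    have hsplit : ∑ w ∈ insert u S, G.edges s(v, w) =
        G.edges s(v, u) + ∑ w ∈ S, G.edges s(v, w) :=
      Finset.sum_insert huS
    by_cases hva : v = a
    · obtain rfl := hva.symm
      have hfu : G.edges s(a, u) ≠ 0 := by rwa [edges_comm] at ha
      have hzero : ∑ w ∈ S, G.edges s(a, w) = 0 := by omega
      refine ⟨a, hvS, ?_⟩
      have hsplit2 : (if s(a, b) = s(a, b) then 1 else
            if u ∈ s(a, b) ∨ x ∈ s(a, b) then 0 else G.edges s(a, b)) +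
          ∑ w ∈ S.erase b,
            (if s(a, w) = s(a, b) then 1 else
              if u ∈ s(a, w) ∨ x ∈ s(a, w) then 0 else G.edges s(a, w)) =
          ∑ w ∈ S,
            (if s(a, w) = s(a, b) then 1 else
              if u ∈ s(a, w) ∨ x ∈ s(a, w) then 0 else G.edges s(a, w)) :=
        Finset.add_sum_erase _ (fun w => if s(a, w) = s(a, b) then 1 else
          if u ∈ s(a, w) ∨ x ∈ s(a, w) then 0 else G.edges s(a, w)) hbS
      have hb1 : (if s(a, b) = s(a, b) then 1 else
          if u ∈ s(a, b) ∨ x ∈ s(a, b) then 0 else G.edges s(a, b)) = 1 := if_pos rfl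
      have hrest : ∑ w ∈ S.erase b,
          (if s(a, w) = s(a, b) then 1 else
            if u ∈ s(a, w) ∨ x ∈ s(a, w) then 0 else G.edges s(a, w)) = 0 := by
        apply Finset.sum_eq_zero
        intro w hw
        have hwb : w ≠ b := (Finset.mem_erase.mp hw).1
        have hne : s(a, w) ≠ s(a, b) := by
          intro heq
          rcases Sym2.eq_iff.mp heq with ⟨_, h2⟩ | ⟨h1, _⟩
          · exact hwb h2
          · exact hab h1
        have hle := hgle a w hne
        have h0 : G.edges s(a, w) = 0 :=
          Finset.sum_eq_zero_iff.mp hzero w (Finset.mem_of_mem_erase hw)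
        omega
      omega
    by_cases hvb : v = b
    · obtain rfl := hvb.symm
      have hfu : G.edges s(b, u) ≠ 0 := by rwa [edges_comm] at hb
      have hzero : ∑ w ∈ S, G.edges s(b, w) = 0 := by omega
      refine ⟨b, hvS, ?_⟩
      have hsplit2 : (if s(b, a) = s(a, b) then 1 else
            if u ∈ s(b, a) ∨ x ∈ s(b, a) then 0 else G.edges s(b, a)) +
          ∑ w ∈ S.erase a,
            (if s(b, w) = s(a, b) then 1 else
              if u ∈ s(b, w) ∨ x ∈ s(b, w) then 0 else G.edges s(b, w)) =
          ∑ w ∈ S,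
            (if s(b, w) = s(a, b) then 1 else
              if u ∈ s(b, w) ∨ x ∈ s(b, w) then 0 else G.edges s(b, w)) :=
        Finset.add_sum_erase _ (fun w => if s(b, w) = s(a, b) then 1 else
          if u ∈ s(b, w) ∨ x ∈ s(b, w) then 0 else G.edges s(b, w)) haS
      have hb1 : (if s(b, a) = s(a, b) then 1 else
          if u ∈ s(b, a) ∨ x ∈ s(b, a) then 0 else G.edges s(b, a)) = 1 := by
        rw [if_pos (by rw [Sym2.eq_swap])]
      have hrest : ∑ w ∈ S.erase a,
          (if s(b, w) = s(a, b) then 1 else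
            if u ∈ s(b, w) ∨ x ∈ s(b, w) then 0 else G.edges s(b, w)) = 0 := by
        apply Finset.sum_eq_zero
        intro w hw
        have hwa : w ≠ a := (Finset.mem_erase.mp hw).1
        have hne : s(b, w) ≠ s(a, b) := by
          intro heq
          rcases Sym2.eq_iff.mp heq with ⟨h1, _⟩ | ⟨_, h2⟩
          · exact hab h1.symm
          · exact hwa h2
        have hle := hgle b w hne
        have h0 : G.edges s(b, w) = 0 :=
          Finset.sum_eq_zero_iff.mp hzero w (Finset.mem_of_mem_erase hw)
        omega
      omega
    · refine ⟨v, hvS, le_trans (Finset.sum_le_sum fun w hw => hgle v w ?_) (by omega)⟩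
      intro heq
      rw [Sym2.eq_iff] at heq
      rcases heq with ⟨h1, _⟩ | ⟨h1, _⟩
      · exact hva h1
      · exact hvb h1
  · obtain ⟨v, hvS, hvs⟩ := hac S (hS.trans (Finset.erase_subset _ _)) hSne
    refine ⟨v, hvS, le_trans (Finset.sum_le_sum fun w hw => hgle v w ?_) hvs⟩
    intro heq
    rw [Sym2.eq_iff] at heq
    rcases heq with ⟨h1, h2⟩ | ⟨h1, h2⟩
    · exact hcase ⟨by rw [← h1]; exact hvS, by rw [← h2]; exact hw⟩
    · exact hcase ⟨by rw [← h2]; exact hw, by rw [← h1]; exact hvS⟩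

end Multigraph

end AuxCPS3

section AuxCPS4

variable {V : Type*} [DecidableEq V]

set_option linter.unusedSectionVars false

namespace Multigraph

lemma esum_def (G : Multigraph V) : G.esum = ∑ v ∈ G.verts, G.degree v := rfl

lemma sum_split {s : Finset V} (f : V → ℕ) {a : V} (h : a ∈ s) :
    ∑ w ∈ s, f w = f a + ∑ w ∈ s.erase a, f w := (Finset.add_sum_erase s f h).symm

/-- delete the (simple) edge `{x,u}` -/
def delEdges (G : Multigraph V) (x u : V) : Sym2 V → ℕ :=
  fun e => if e = s(x, u) then G.edges e - 1 else G.edges e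

/-- suppress `u` (shortcut `{a,b}`), also clearing all edges at `x` -/
def suppEdges (G : Multigraph V) (x u a b : V) : Sym2 V → ℕ :=
  fun e => if e = s(a, b) then 1 else if u ∈ e ∨ x ∈ e then 0 else G.edges e

lemma delEdges_ne {G : Multigraph V} {x u v w : V} (h1 : ¬(v = x ∧ w = u))
    (h2 : ¬(v = u ∧ w = x)) : delEdges G x u s(v, w) = G.edges s(v, w) := by
  simp only [delEdges]
  rw [if_neg]
  intro heq
  rcases Sym2.eq_iff.mp heq with h | h
  exacts [h1 h, h2 h]

lemma delEdges_le {G : Multigraph V} (x u : V) (e : Sym2 V) :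
    delEdges G x u e ≤ G.edges e := by
  simp only [delEdges]; split <;> omega

lemma removePendant_exists {G : Multigraph V} {Y : Finset V} {x : V}
    (hG : G.IsForest Y) (hx : x ∈ Y) (hdeg : G.degree x = 1) :
    ∃ Fn, RemovedPendant G x Fn ∧ Fn.IsForest Y ∧ Fn.IsIsolated x ∧ Fn.esum + 2 ≤ G.esum := by
  obtain ⟨hs, hac, hleaf, hdcond⟩ := hG
  obtain ⟨u, huv, hxu, hxu1, hxw⟩ := degree_one_struct hdeg
  have hxune : G.edges s(x, u) ≠ 0 := by rw [hxu1]; exact one_ne_zero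
  have hxv : x ∈ G.verts := mem_left hxune
  have hux1 : G.edges s(u, x) = 1 := by rw [← edges_comm]; exact hxu1
  have huxne : G.edges s(u, x) ≠ 0 := by rw [hux1]; exact one_ne_zero
  have hu_pos : 1 ≤ G.degree u := by
    rw [degree_def]
    exact le_trans (le_of_eq hux1.symm) (Finset.single_le_sum (f := fun w => G.edges s(u, w))
      (fun i _ => Nat.zero_le _) hxv)
  -- common: pointwise facts about delEdges
  have hxe : ∀ w, delEdges G x u s(x, w) = 0 := by
    intro w
    by_cases hwu : w = u
    · rw [hwu]
      simp [delEdges, hxu1]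
    · rw [delEdges_ne (fun h => hwu h.2) (fun h => hxu h.1)]
      exact hxw w hwu
  have lp1 : ∀ v : V, delEdges G x u s(v, v) = 0 := by
    intro v
    simp only [delEdges]
    split <;> simp [G.loopless v]
  have sp1 : ∀ p q : V, delEdges G x u s(p, q) ≠ 0 → p ∈ G.verts := by
    intro p q hpq
    simp only [delEdges] at hpq
    split at hpq
    · next heq =>
      rw [heq, hxu1] at hpq
      simp at hpq
    · exact mem_left hpq
  rcases hdcond u huv with hu1 | hu3
  · -- CASE A : u has degree 1
    have hu1' : G.degree u = 1 := le_antisymm hu1 hu_pos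
    obtain ⟨w₀, hw₀v, huw₀, hw₀1, hw₀⟩ := degree_one_struct hu1'
    have hw0x : w₀ = x := by
      by_contra hne
      have h0 := hw₀ x (fun h => hne h.symm)
      rw [hux1] at h0
      exact one_ne_zero h0
    rw [hw0x] at hw₀
    have hue : ∀ w, delEdges G x u s(u, w) = 0 := by
      intro w
      by_cases hwx : w = x
      · rw [hwx]
        simp only [delEdges]
        rw [if_pos Sym2.eq_swap, hux1]
      · rw [delEdges_ne (fun h => hxu h.1.symm) (fun h => hwx h.2)]
        exact hw₀ w hwx
    set Fn : Multigraph V := ⟨G.verts, delEdges G x u, lp1, sp1⟩ with hFndef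
    have hFnverts : Fn.verts = G.verts := rfl
    have hdx : Fn.degree x = 0 := Finset.sum_eq_zero fun w _ => hxe w
    have hdu : Fn.degree u = 0 := Finset.sum_eq_zero fun w _ => hue w
    have hdv : ∀ v, v ≠ x → v ≠ u → Fn.degree v = G.degree v := by
      intro v hvx hvu
      apply Finset.sum_congr rfl
      intro w _
      exact delEdges_ne (fun h => hvx h.1) (fun h => hvu h.1)
    have huex : u ∈ G.verts.erase x := Finset.mem_erase.mpr ⟨fun h => hxu h.symm, huv⟩
    refine ⟨Fn, ⟨u, hdeg, hxune, Fn, Fn, ⟨hxune, rfl, fun e => rfl⟩,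
      Or.inl ⟨by rw [hdx]; omega, rfl⟩, Or.inl ⟨by rw [hdu]; omega, rfl⟩⟩,
      ⟨?_, ?_, ?_, ?_⟩, ⟨hxv, hdx⟩, ?_⟩
    · intro e
      exact le_trans (delEdges_le x u e) (hs e)
    · exact acyclic_mono (G := G) (Finset.Subset.refl _) (fun e => delEdges_le x u e) hac
    · have hiff : ∀ v, Fn.IsLeaf v ↔ G.IsLeaf v := by
        intro v
        by_cases hvx : v = x
        · rw [hvx]
          exact ⟨fun _ => ⟨hxv, by omega⟩, fun _ => ⟨hxv, by rw [hdx]; omega⟩⟩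
        by_cases hvu : v = u
        · rw [hvu]
          exact ⟨fun _ => ⟨huv, by omega⟩, fun _ => ⟨huv, by rw [hdu]; omega⟩⟩
        · unfold IsLeaf
          rw [hdv v hvx hvu, hFnverts]
      have heq : Fn.leafSet = G.leafSet := Set.ext fun v => hiff v
      rw [heq, hleaf]
    · intro v hv
      rw [hFnverts] at hv
      by_cases hvx : v = x
      · left; rw [hvx, hdx]; omega
      by_cases hvu : v = u
      · left; rw [hvu, hdu]; omega
      · rw [hdv v hvx hvu]
        exact hdcond v hv
    · have e1 : G.esum = G.degree x + (G.degree u + ∑ v ∈ (G.verts.erase x).erase u, G.degree v) := by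
        rw [esum_def, sum_split G.degree hxv, sum_split G.degree huex]
      have e2 : Fn.esum = Fn.degree x + (Fn.degree u + ∑ v ∈ (G.verts.erase x).erase u, Fn.degree v) := by
        rw [esum_def, hFnverts, sum_split Fn.degree hxv, sum_split Fn.degree huex]
      have e3 : ∑ v ∈ (G.verts.erase x).erase u, Fn.degree v =
          ∑ v ∈ (G.verts.erase x).erase u, G.degree v := by
        apply Finset.sum_congr rfl
        intro v hv
        obtain ⟨hvu, hv2⟩ := Finset.mem_erase.mp hv
        exact hdv v (Finset.mem_erase.mp hv2).1 hvu
      omega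
  · -- CASE B : u has degree 3
    obtain ⟨a, b, hav, hbv, hab, hax, hbx, hau, hbu, hua1, hub1, hux1', hN⟩ :=
      degree_three_struct hs hu3 huxne
    have hua0 : G.edges s(u, a) ≠ 0 := by rw [hua1]; exact one_ne_zero
    have hub0 : G.edges s(u, b) ≠ 0 := by rw [hub1]; exact one_ne_zero
    have htri : G.edges s(a, b) = 0 := no_triangle hac hua0 hub0 hab
    have hxa0 : G.edges s(a, x) = 0 := by
      rw [← edges_comm]; exact hxw a hau
    have hxb0 : G.edges s(b, x) = 0 := by
      rw [← edges_comm]; exact hxw b hbu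
    -- pointwise facts about suppEdges
    have gne : ∀ p q : V, s(p, q) ≠ s(a, b) → ¬(u = p ∨ u = q) → ¬(x = p ∨ x = q) →
        suppEdges G x u a b s(p, q) = G.edges s(p, q) := by
      intro p q h1 h2 h3
      simp only [suppEdges]
      rw [if_neg h1, if_neg]
      rintro (h | h)
      · exact h2 (Sym2.mem_iff.mp h)
      · exact h3 (Sym2.mem_iff.mp h)
    have gab : suppEdges G x u a b s(a, b) = 1 := if_pos rfl
    have gu : ∀ w, suppEdges G x u a b s(u, w) = 0 := by
      intro w
      simp only [suppEdges]
      rw [if_neg, if_pos (Or.inl (Sym2.mem_iff.mpr (Or.inl rfl)))]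
      intro heq
      rcases Sym2.eq_iff.mp heq with ⟨h, _⟩ | ⟨h, _⟩
      exacts [hau h.symm, hbu h.symm]
    have gx : ∀ w, suppEdges G x u a b s(x, w) = 0 := by
      intro w
      simp only [suppEdges]
      rw [if_neg, if_pos (Or.inr (Sym2.mem_iff.mpr (Or.inl rfl)))]
      intro heq
      rcases Sym2.eq_iff.mp heq with ⟨h, _⟩ | ⟨h, _⟩
      exacts [hax h.symm, hbx h.symm]
    have haw : ∀ w, w ≠ b → w ≠ u → suppEdges G x u a b s(a, w) = G.edges s(a, w) := by
      intro w hwb hwu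
      by_cases hwx : w = x
      · rw [hwx]
        simp only [suppEdges]
        rw [if_neg, if_pos (Or.inr (Sym2.mem_iff.mpr (Or.inr rfl))), hxa0]
        intro heq
        rcases Sym2.eq_iff.mp heq with ⟨_, h⟩ | ⟨h, _⟩
        exacts [hbx h.symm, hab h]
      · apply gne
        · intro heq
          rcases Sym2.eq_iff.mp heq with ⟨_, h⟩ | ⟨h, _⟩
          exacts [hwb h, hab h]
        · rintro (h | h)
          exacts [hau h.symm, hwu h.symm]
        · rintro (h | h)
          exacts [hax h.symm, hwx h.symm]
    have hbw : ∀ w, w ≠ a → w ≠ u → suppEdges G x u a b s(b, w) = G.edges s(b, w) := by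
      intro w hwa hwu
      by_cases hwx : w = x
      · rw [hwx]
        simp only [suppEdges]
        rw [if_neg, if_pos (Or.inr (Sym2.mem_iff.mpr (Or.inr rfl))), hxb0]
        intro heq
        rcases Sym2.eq_iff.mp heq with ⟨h, _⟩ | ⟨_, h⟩
        exacts [hab h.symm, hax h.symm]
      · apply gne
        · intro heq
          rcases Sym2.eq_iff.mp heq with ⟨h, _⟩ | ⟨_, h⟩
          exacts [hab h.symm, hwa h]
        · rintro (h | h)
          exacts [hbu h.symm, hwu h.symm]
        · rintro (h | h)
          exacts [hbx h.symm, hwx h.symm]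
    have hvw : ∀ v, v ≠ x → v ≠ u → v ≠ a → v ≠ b →
        ∀ w, w ≠ u → suppEdges G x u a b s(v, w) = G.edges s(v, w) := by
      intro v hvx hvu hva hvb w hwu
      by_cases hwx : w = x
      · rw [hwx]
        have h1 : G.edges s(v, x) = 0 := by
          rw [← edges_comm]; exact hxw v hvu
        simp only [suppEdges]
        rw [if_neg, if_pos (Or.inr (Sym2.mem_iff.mpr (Or.inr rfl))), h1]
        intro heq
        rcases Sym2.eq_iff.mp heq with ⟨h, _⟩ | ⟨h, _⟩
        exacts [hva h, hvb h]
      · apply gne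
        · intro heq
          rcases Sym2.eq_iff.mp heq with ⟨h, _⟩ | ⟨h, _⟩
          exacts [hva h, hvb h]
        · rintro (h | h)
          exacts [hvu h.symm, hwu h.symm]
        · rintro (h | h)
          exacts [hvx h.symm, hwx h.symm]
    have lp : ∀ v : V, suppEdges G x u a b s(v, v) = 0 := by
      intro v
      simp only [suppEdges]
      rw [if_neg]
      · split
        · rfl
        · exact G.loopless v
      · intro heq
        rcases Sym2.eq_iff.mp heq with ⟨h1, h2⟩ | ⟨h1, h2⟩
        · exact hab (h1.symm.trans h2)
        · exact hab (h2.symm.trans h1)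
    have sp : ∀ p q : V, suppEdges G x u a b s(p, q) ≠ 0 → p ∈ G.verts.erase u := by
      intro p q hpq
      by_cases h1 : s(p, q) = s(a, b)
      · rcases Sym2.eq_iff.mp h1 with ⟨h, _⟩ | ⟨h, _⟩
        · rw [h]; exact Finset.mem_erase.mpr ⟨hau, hav⟩
        · rw [h]; exact Finset.mem_erase.mpr ⟨hbu, hbv⟩
      · by_cases h2 : u ∈ s(p, q) ∨ x ∈ s(p, q)
        · exact absurd (by simp only [suppEdges]; rw [if_neg h1, if_pos h2]) hpq
        · have hG0 : G.edges s(p, q) ≠ 0 := by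
            intro h0
            exact hpq (by simp only [suppEdges]; rw [if_neg h1, if_neg h2]; exact h0)
          refine Finset.mem_erase.mpr ⟨?_, mem_left hG0⟩
          intro h
          exact h2 (Or.inl (Sym2.mem_iff.mpr (Or.inl h.symm)))
    set Fn : Multigraph V := ⟨G.verts.erase u, suppEdges G x u a b, lp, sp⟩ with hFndef
    have hFnverts : Fn.verts = G.verts.erase u := rfl
    have hxmem : x ∈ G.verts.erase u := Finset.mem_erase.mpr ⟨hxu, hxv⟩
    have hamem : a ∈ G.verts.erase u := Finset.mem_erase.mpr ⟨hau, hav⟩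
    have hbmem : b ∈ G.verts.erase u := Finset.mem_erase.mpr ⟨hbu, hbv⟩
    have hdx : Fn.degree x = 0 := Finset.sum_eq_zero fun w _ => gx w
    have hda : Fn.degree a = G.degree a := by
      have e1 : Fn.degree a = 1 + ∑ w ∈ (G.verts.erase u).erase b, G.edges s(a, w) := by
        show ∑ w ∈ G.verts.erase u, suppEdges G x u a b s(a, w) = _
        rw [sum_split (fun w => suppEdges G x u a b s(a, w)) hbmem, gab]
        congr 1
        apply Finset.sum_congr rfl
        intro w hw
        obtain ⟨hwb, hw2⟩ := Finset.mem_erase.mp hw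
        exact haw w hwb (Finset.mem_erase.mp hw2).1
      have e2 : G.degree a =
          G.edges s(a, u) + (G.edges s(a, b) + ∑ w ∈ (G.verts.erase u).erase b, G.edges s(a, w)) := by
        rw [degree_def, sum_split (fun w => G.edges s(a, w)) huv,
          sum_split (fun w => G.edges s(a, w)) hbmem]
      have e3 : G.edges s(a, u) = 1 := by rw [← edges_comm]; exact hua1
      omega
    have hdb : Fn.degree b = G.degree b := by
      have e1 : Fn.degree b = 1 + ∑ w ∈ (G.verts.erase u).erase a, G.edges s(b, w) := by
        show ∑ w ∈ G.verts.erase u, suppEdges G x u a b s(b, w) = _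
        rw [sum_split (fun w => suppEdges G x u a b s(b, w)) hamem]
        have hba : suppEdges G x u a b s(b, a) = 1 := by
          rw [Sym2.eq_swap]; exact gab
        rw [hba]
        congr 1
        apply Finset.sum_congr rfl
        intro w hw
        obtain ⟨hwa, hw2⟩ := Finset.mem_erase.mp hw
        exact hbw w hwa (Finset.mem_erase.mp hw2).1
      have e2 : G.degree b =
          G.edges s(b, u) + (G.edges s(b, a) + ∑ w ∈ (G.verts.erase u).erase a, G.edges s(b, w)) := by
        rw [degree_def, sum_split (fun w => G.edges s(b, w)) huv,
          sum_split (fun w => G.edges s(b, w)) hamem]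
      have e3 : G.edges s(b, u) = 1 := by rw [← edges_comm]; exact hub1
      have e4 : G.edges s(b, a) = 0 := by rw [← edges_comm]; exact htri
      omega
    have hdvv : ∀ v, v ≠ x → v ≠ u → v ≠ a → v ≠ b → Fn.degree v = G.degree v := by
      intro v hvx hvu hva hvb
      have e1 : Fn.degree v = ∑ w ∈ G.verts.erase u, G.edges s(v, w) := by
        show ∑ w ∈ G.verts.erase u, suppEdges G x u a b s(v, w) = _
        apply Finset.sum_congr rfl
        intro w hw
        exact hvw v hvx hvu hva hvb w (Finset.mem_erase.mp hw).1
      have e2 : G.degree v = G.edges s(v, u) + ∑ w ∈ G.verts.erase u, G.edges s(v, w) := by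
        rw [degree_def, sum_split (fun w => G.edges s(v, w)) huv]
      have e3 : G.edges s(v, u) = 0 := by
        rw [← edges_comm]
        exact hN v hvx hva hvb
      omega
    -- the removal chain
    set G₁ : Multigraph V := ⟨G.verts, delEdges G x u, lp1, sp1⟩ with hG₁def
    have hd1x : G₁.degree x = 0 := Finset.sum_eq_zero fun w _ => hxe w
    have hd1u : G₁.degree u = 2 := by
      have e0 : ∀ w, delEdges G x u s(u, w) = if w = x then 0 else G.edges s(u, w) := by
        intro w
        by_cases hwx : w = x
        · rw [if_pos hwx, hwx]
          simp only [delEdges]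
          rw [if_pos Sym2.eq_swap, hux1]
        · rw [if_neg hwx]
          exact delEdges_ne (fun h => hxu h.1.symm) (fun h => hwx h.2)
      have e1 : G₁.degree u = ∑ w ∈ G.verts, (if w = x then 0 else G.edges s(u, w)) := by
        show ∑ w ∈ G.verts, delEdges G x u s(u, w) = _
        exact Finset.sum_congr rfl fun w _ => e0 w
      have e2 : ∑ w ∈ G.verts, (if w = x then 0 else G.edges s(u, w)) =
          ∑ w ∈ G.verts.erase x, G.edges s(u, w) := by
        rw [sum_split (fun w => if w = x then 0 else G.edges s(u, w)) hxv, if_pos rfl]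
        rw [zero_add]
        apply Finset.sum_congr rfl
        intro w hw
        rw [if_neg (Finset.mem_erase.mp hw).1]
      have e3 : G.degree u = G.edges s(u, x) + ∑ w ∈ G.verts.erase x, G.edges s(u, w) := by
        rw [degree_def, sum_split (fun w => G.edges s(u, w)) hxv]
      omega
    have hedges_formula : ∀ e, Fn.edges e =
        if e = s(a, b) then G₁.edges s(a, b) + 1 else if u ∈ e then 0 else G₁.edges e := by
      intro e
      induction e using Sym2.ind with
      | _ p q =>
        show suppEdges G x u a b s(p, q) = _
        by_cases h1 : s(p, q) = s(a, b)
        · rw [if_pos h1, h1, gab]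
          have : G₁.edges s(a, b) = 0 := by
            show delEdges G x u s(a, b) = 0
            rw [delEdges_ne (fun h => hax h.1) (fun h => hau h.1)]
            exact htri
          rw [this]
        · rw [if_neg h1]
          by_cases h2 : u ∈ s(p, q)
          · rw [if_pos h2]
            simp only [suppEdges]
            rw [if_neg h1, if_pos (Or.inl h2)]
          · rw [if_neg h2]
            by_cases h3 : x ∈ s(p, q)
            · have hg0 : G.edges s(p, q) = 0 := by
                rcases Sym2.mem_iff.mp h3 with h | h
                · rw [h.symm] at h2 ⊢
                  exact hxw q (fun hq => h2 (by rw [hq]; exact Sym2.mem_iff.mpr (Or.inr rfl)))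
                · rw [h.symm] at h2 ⊢
                  rw [edges_comm]
                  exact hxw p (fun hp => h2 (by rw [hp]; exact Sym2.mem_iff.mpr (Or.inl rfl)))
              have l : suppEdges G x u a b s(p, q) = 0 := by
                simp only [suppEdges]
                rw [if_neg h1, if_pos (Or.inr h3)]
              have r : G₁.edges s(p, q) = 0 := by
                show delEdges G x u s(p, q) = 0
                simp only [delEdges]
                split <;> omega
              rw [l, r]
            · have l : suppEdges G x u a b s(p, q) = G.edges s(p, q) := by
                simp only [suppEdges]
                rw [if_neg h1, if_neg]
                rintro (h | h)
                exacts [h2 h, h3 h]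
              have r : G₁.edges s(p, q) = G.edges s(p, q) := by
                show delEdges G x u s(p, q) = _
                simp only [delEdges]
                rw [if_neg]
                intro heq
                rw [heq] at h3
                exact h3 (Sym2.mem_iff.mpr (Or.inl rfl))
              rw [l, r]
    refine ⟨Fn, ⟨u, hdeg, hxune, G₁, G₁, ⟨hxune, rfl, fun e => rfl⟩,
      Or.inl ⟨by rw [hd1x]; omega, rfl⟩,
      Or.inr ⟨a, b, hab, ?_, ?_, hd1u, rfl, hedges_formula⟩⟩,
      ⟨?_, ?_, ?_, ?_⟩, ⟨hxmem, hdx⟩, ?_⟩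
    · show delEdges G x u s(u, a) ≠ 0
      rw [delEdges_ne (fun h => hxu h.1.symm) (fun h => hax h.2)]
      exact hua0
    · show delEdges G x u s(u, b) ≠ 0
      rw [delEdges_ne (fun h => hxu h.1.symm) (fun h => hbx h.2)]
      exact hub0
    · -- simple
      intro e
      show suppEdges G x u a b e ≤ 1
      simp only [suppEdges]
      split
      · omega
      split
      · omega
      · exact hs e
    · -- acyclic
      intro S hS hSne
      exact acyclic_suppress hac hab hua0 hub0 S hS hSne
    · -- leafSet
      have hiff : ∀ v, Fn.IsLeaf v ↔ G.IsLeaf v := by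
        intro v
        by_cases hvx : v = x
        · rw [hvx]
          exact ⟨fun _ => ⟨hxv, by omega⟩, fun _ => ⟨hxmem, by rw [hdx]; omega⟩⟩
        by_cases hvu : v = u
        · rw [hvu]
          constructor
          · intro hl
            have := hl.1
            rw [hFnverts] at this
            exact absurd rfl (Finset.mem_erase.mp this).1
          · intro hl
            have := hl.2
            omega
        by_cases hva : v = a
        · rw [hva]
          unfold IsLeaf
          rw [hda, hFnverts]
          constructor
          · intro h; exact ⟨hav, h.2⟩
          · intro h; exact ⟨hamem, h.2⟩
        by_cases hvb : v = b
        · rw [hvb]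
          unfold IsLeaf
          rw [hdb, hFnverts]
          constructor
          · intro h; exact ⟨hbv, h.2⟩
          · intro h; exact ⟨hbmem, h.2⟩
        · unfold IsLeaf
          rw [hdvv v hvx hvu hva hvb, hFnverts]
          constructor
          · intro h; exact ⟨Finset.mem_of_mem_erase h.1, h.2⟩
          · intro h; exact ⟨Finset.mem_erase.mpr ⟨hvu, h.1⟩, h.2⟩
      have heq : Fn.leafSet = G.leafSet := Set.ext fun v => hiff v
      rw [heq, hleaf]
    · -- degree condition
      intro v hv
      rw [hFnverts] at hv
      obtain ⟨hvu, hvv⟩ := Finset.mem_erase.mp hv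
      by_cases hvx : v = x
      · left; rw [hvx, hdx]; omega
      by_cases hva : v = a
      · rw [hva, hda]; exact hdcond a hav
      by_cases hvb : v = b
      · rw [hvb, hdb]; exact hdcond b hbv
      · rw [hdvv v hvx hvu hva hvb]; exact hdcond v hvv
    · -- esum
      have key : ∀ v ∈ G.verts.erase u, Fn.degree v = if v = x then 0 else G.degree v := by
        intro v hv
        obtain ⟨hvu, hvv⟩ := Finset.mem_erase.mp hv
        by_cases hvx : v = x
        · rw [if_pos hvx, hvx, hdx]
        rw [if_neg hvx]
        by_cases hva : v = a
        · rw [hva, hda]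
        by_cases hvb : v = b
        · rw [hvb, hdb]
        · exact hdvv v hvx hvu hva hvb
      have e1 : Fn.esum = ∑ v ∈ G.verts.erase u, (if v = x then 0 else G.degree v) := by
        rw [esum_def, hFnverts]
        exact Finset.sum_congr rfl key
      have e2 : ∑ v ∈ G.verts.erase u, (if v = x then 0 else G.degree v) =
          ∑ v ∈ (G.verts.erase u).erase x, G.degree v := by
        rw [sum_split (fun v => if v = x then 0 else G.degree v) hxmem, if_pos rfl, zero_add]
        apply Finset.sum_congr rfl
        intro v hv
        rw [if_neg (Finset.mem_erase.mp hv).1]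
      have e3 : G.esum = G.degree u + (G.degree x + ∑ v ∈ (G.verts.erase u).erase x, G.degree v) := by
        rw [esum_def, sum_split G.degree huv, sum_split G.degree hxmem]
      omega

end Multigraph

end AuxCPS4

section AuxCPS5

variable {V : Type*} [DecidableEq V]

set_option linter.unusedSectionVars false

namespace Multigraph

lemma removeLeaf_exists {G : Multigraph V} {Y : Finset V} {x : V}
    (hG : G.IsForest Y) (hx : x ∈ Y) :
    ∃ Fn, RemovedLeaf G x Fn ∧ Fn.IsForest (Y.erase x) ∧ Fn.esum ≤ G.esum := by
  have hG' := hG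
  obtain ⟨hs, hac, hleaf, hdcond⟩ := hG
  have hxl : G.IsLeaf x := (leaf_iff_mem hG' x).mpr hx
  have hxv : x ∈ G.verts := hxl.1
  rcases Nat.lt_or_ge (G.degree x) 1 with h0 | h1
  · -- CASE 0 : x is isolated
    have hdeg0 : G.degree x = 0 := by omega
    have hiso : G.IsIsolated x := ⟨hxv, hdeg0⟩
    have sp : ∀ p q : V, G.edges s(p, q) ≠ 0 → p ∈ G.verts.erase x := by
      intro p q hpq
      refine Finset.mem_erase.mpr ⟨?_, mem_left hpq⟩
      intro hp
      rw [hp] at hpq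
      exact hpq (isolated_edges hiso q)
    set Fn : Multigraph V := ⟨G.verts.erase x, G.edges, G.loopless, sp⟩ with hFndef
    have hFnverts : Fn.verts = G.verts.erase x := rfl
    have hdd : ∀ v, Fn.degree v = G.degree v := by
      intro v
      show ∑ w ∈ G.verts.erase x, G.edges s(v, w) = G.degree v
      rw [degree_def]
      exact Finset.sum_erase _ (by rw [edges_comm]; exact isolated_edges hiso v)
    refine ⟨Fn, Or.inl ⟨hiso, rfl, fun e => rfl⟩, ⟨hs, ?_, ?_, ?_⟩, ?_⟩
    · exact acyclic_mono (G := G) (Finset.erase_subset _ _) (fun e => le_refl _) hac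
    · apply Set.ext
      intro v
      constructor
      · intro hl
        have h1 : v ∈ G.verts.erase x := hl.1
        have h2 : G.IsLeaf v := ⟨Finset.mem_of_mem_erase h1, by rw [← hdd v]; exact hl.2⟩
        exact Finset.mem_coe.mpr
          (Finset.mem_erase.mpr ⟨(Finset.mem_erase.mp h1).1, (leaf_iff_mem hG' v).mp h2⟩)
      · intro hv
        obtain ⟨hvx, hvY⟩ := Finset.mem_erase.mp (Finset.mem_coe.mp hv)
        have h2 : G.IsLeaf v := (leaf_iff_mem hG' v).mpr hvY
        exact ⟨Finset.mem_erase.mpr ⟨hvx, h2.1⟩, by rw [hdd v]; exact h2.2⟩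
    · intro v hv
      rw [hdd v]
      exact hdcond v (Finset.mem_of_mem_erase hv)
    · have e1 : Fn.esum = ∑ v ∈ G.verts.erase x, G.degree v := by
        rw [esum_def, hFnverts]
        exact Finset.sum_congr rfl fun v _ => hdd v
      have e2 : G.esum = G.degree x + ∑ v ∈ G.verts.erase x, G.degree v := by
        rw [esum_def, sum_split G.degree hxv]
      omega
  · -- x has degree 1
    have hdeg : G.degree x = 1 := le_antisymm hxl.2 h1
    obtain ⟨u, huv, hxu, hxu1, hxw⟩ := degree_one_struct hdeg
    have hxune : G.edges s(x, u) ≠ 0 := by rw [hxu1]; exact one_ne_zero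
    have hux1 : G.edges s(u, x) = 1 := by rw [← edges_comm]; exact hxu1
    have huxne : G.edges s(u, x) ≠ 0 := by rw [hux1]; exact one_ne_zero
    have hu_pos : 1 ≤ G.degree u := by
      rw [degree_def]
      exact le_trans (le_of_eq hux1.symm) (Finset.single_le_sum (f := fun w => G.edges s(u, w))
        (fun i _ => Nat.zero_le _) hxv)
    have hxe : ∀ w, delEdges G x u s(x, w) = 0 := by
      intro w
      by_cases hwu : w = u
      · rw [hwu]
        simp [delEdges, hxu1]
      · rw [delEdges_ne (fun h => hwu h.2) (fun h => hxu h.1)]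
        exact hxw w hwu
    have lp1 : ∀ v : V, delEdges G x u s(v, v) = 0 := by
      intro v
      simp only [delEdges]
      split <;> simp [G.loopless v]
    have sp1 : ∀ p q : V, delEdges G x u s(p, q) ≠ 0 → p ∈ G.verts := by
      intro p q hpq
      simp only [delEdges] at hpq
      split at hpq
      · next heq =>
        rw [heq, hxu1] at hpq
        simp at hpq
      · exact mem_left hpq
    have sp2 : ∀ p q : V, delEdges G x u s(p, q) ≠ 0 → p ∈ G.verts.erase x := by
      intro p q hpq
      refine Finset.mem_erase.mpr ⟨?_, sp1 p q hpq⟩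
      intro hp
      rw [hp] at hpq
      exact hpq (hxe q)
    set G₁ : Multigraph V := ⟨G.verts, delEdges G x u, lp1, sp1⟩ with hG₁def
    have hd1x : G₁.degree x = 0 := Finset.sum_eq_zero fun w _ => hxe w
    have huex : u ∈ G.verts.erase x := Finset.mem_erase.mpr ⟨fun h => hxu h.symm, huv⟩
    rcases hdcond u huv with hu1 | hu3
    · -- CASE A : u has degree 1
      have hu1' : G.degree u = 1 := le_antisymm hu1 hu_pos
      obtain ⟨w₀, hw₀v, huw₀, hw₀1, hw₀⟩ := degree_one_struct hu1'
      have hw0x : w₀ = x := by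
        by_contra hne
        have h0 := hw₀ x (fun h => hne h.symm)
        rw [hux1] at h0
        exact one_ne_zero h0
      rw [hw0x] at hw₀
      have hue : ∀ w, delEdges G x u s(u, w) = 0 := by
        intro w
        by_cases hwx : w = x
        · rw [hwx]
          simp only [delEdges]
          rw [if_pos Sym2.eq_swap, hux1]
        · rw [delEdges_ne (fun h => hxu h.1.symm) (fun h => hwx h.2)]
          exact hw₀ w hwx
      set Fn : Multigraph V := ⟨G.verts.erase x, delEdges G x u, lp1, sp2⟩ with hFndef
      have hFnverts : Fn.verts = G.verts.erase x := rfl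
      have hdu : Fn.degree u = 0 := Finset.sum_eq_zero fun w _ => hue w
      have hdv : ∀ v, v ≠ x → v ≠ u → Fn.degree v = G.degree v := by
        intro v hvx hvu
        have e1 : Fn.degree v = ∑ w ∈ G.verts.erase x, G.edges s(v, w) := by
          show ∑ w ∈ G.verts.erase x, delEdges G x u s(v, w) = _
          exact Finset.sum_congr rfl fun w _ =>
            delEdges_ne (fun h => hvx h.1) (fun h => hvu h.1)
        rw [e1, degree_def]
        exact Finset.sum_erase _ (by rw [edges_comm]; exact hxw v hvu)
      have huY : u ∈ Y := (leaf_iff_mem hG' u).mp ⟨huv, by omega⟩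
      refine ⟨Fn, Or.inr ⟨u, G₁, Fn, hdeg, hxune, ⟨hxune, rfl, fun e => rfl⟩,
        ⟨⟨hxv, hd1x⟩, rfl, fun e => rfl⟩, Or.inl ⟨by rw [hdu]; omega, rfl⟩⟩,
        ⟨?_, ?_, ?_, ?_⟩, ?_⟩
      · intro e
        exact le_trans (delEdges_le x u e) (hs e)
      · exact acyclic_mono (G := G) (Finset.erase_subset _ _) (fun e => delEdges_le x u e) hac
      · apply Set.ext
        intro v
        constructor
        · intro hl
          have h1 : v ∈ G.verts.erase x := hl.1
          have hvx := (Finset.mem_erase.mp h1).1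
          by_cases hvu : v = u
          · rw [hvu]
            exact Finset.mem_coe.mpr (Finset.mem_erase.mpr ⟨fun h => hxu h.symm, huY⟩)
          · have h2 : G.IsLeaf v :=
              ⟨Finset.mem_of_mem_erase h1, by rw [← hdv v hvx hvu]; exact hl.2⟩
            exact Finset.mem_coe.mpr
              (Finset.mem_erase.mpr ⟨hvx, (leaf_iff_mem hG' v).mp h2⟩)
        · intro hv
          obtain ⟨hvx, hvY⟩ := Finset.mem_erase.mp (Finset.mem_coe.mp hv)
          have h2 : G.IsLeaf v := (leaf_iff_mem hG' v).mpr hvY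
          refine ⟨Finset.mem_erase.mpr ⟨hvx, h2.1⟩, ?_⟩
          by_cases hvu : v = u
          · rw [hvu, hdu]; omega
          · rw [hdv v hvx hvu]; exact h2.2
      · intro v hv
        have hvx := (Finset.mem_erase.mp hv).1
        by_cases hvu : v = u
        · left; rw [hvu, hdu]; omega
        · rw [hdv v hvx hvu]
          exact hdcond v (Finset.mem_of_mem_erase hv)
      · have e1 : Fn.esum = Fn.degree u + ∑ v ∈ (G.verts.erase x).erase u, Fn.degree v := by
          rw [esum_def, hFnverts, sum_split Fn.degree huex]
        have e2 : ∑ v ∈ (G.verts.erase x).erase u, Fn.degree v =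
            ∑ v ∈ (G.verts.erase x).erase u, G.degree v := by
          apply Finset.sum_congr rfl
          intro v hv
          obtain ⟨hvu, hv2⟩ := Finset.mem_erase.mp hv
          exact hdv v (Finset.mem_erase.mp hv2).1 hvu
        have e3 : G.esum = G.degree x + (G.degree u + ∑ v ∈ (G.verts.erase x).erase u, G.degree v) := by
          rw [esum_def, sum_split G.degree hxv, sum_split G.degree huex]
        omega
    · -- CASE B : u has degree 3
      obtain ⟨a, b, hav, hbv, hab, hax, hbx, hau, hbu, hua1, hub1, hux1', hN⟩ :=
        degree_three_struct hs hu3 huxne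
      have hua0 : G.edges s(u, a) ≠ 0 := by rw [hua1]; exact one_ne_zero
      have hub0 : G.edges s(u, b) ≠ 0 := by rw [hub1]; exact one_ne_zero
      have htri : G.edges s(a, b) = 0 := no_triangle hac hua0 hub0 hab
      have hxa0 : G.edges s(a, x) = 0 := by
        rw [← edges_comm]; exact hxw a hau
      have hxb0 : G.edges s(b, x) = 0 := by
        rw [← edges_comm]; exact hxw b hbu
      have gne : ∀ p q : V, s(p, q) ≠ s(a, b) → ¬(u = p ∨ u = q) → ¬(x = p ∨ x = q) →
          suppEdges G x u a b s(p, q) = G.edges s(p, q) := by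
        intro p q h1 h2 h3
        simp only [suppEdges]
        rw [if_neg h1, if_neg]
        rintro (h | h)
        · exact h2 (Sym2.mem_iff.mp h)
        · exact h3 (Sym2.mem_iff.mp h)
      have gab : suppEdges G x u a b s(a, b) = 1 := if_pos rfl
      have gu : ∀ w, suppEdges G x u a b s(u, w) = 0 := by
        intro w
        simp only [suppEdges]
        rw [if_neg, if_pos (Or.inl (Sym2.mem_iff.mpr (Or.inl rfl)))]
        intro heq
        rcases Sym2.eq_iff.mp heq with ⟨h, _⟩ | ⟨h, _⟩
        exacts [hau h.symm, hbu h.symm]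
      have gx : ∀ w, suppEdges G x u a b s(x, w) = 0 := by
        intro w
        simp only [suppEdges]
        rw [if_neg, if_pos (Or.inr (Sym2.mem_iff.mpr (Or.inl rfl)))]
        intro heq
        rcases Sym2.eq_iff.mp heq with ⟨h, _⟩ | ⟨h, _⟩
        exacts [hax h.symm, hbx h.symm]
      have haw : ∀ w, w ≠ b → w ≠ u → suppEdges G x u a b s(a, w) = G.edges s(a, w) := by
        intro w hwb hwu
        by_cases hwx : w = x
        · rw [hwx]
          simp only [suppEdges]
          rw [if_neg, if_pos (Or.inr (Sym2.mem_iff.mpr (Or.inr rfl))), hxa0]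
          intro heq
          rcases Sym2.eq_iff.mp heq with ⟨_, h⟩ | ⟨h, _⟩
          exacts [hbx h.symm, hab h]
        · apply gne
          · intro heq
            rcases Sym2.eq_iff.mp heq with ⟨_, h⟩ | ⟨h, _⟩
            exacts [hwb h, hab h]
          · rintro (h | h)
            exacts [hau h.symm, hwu h.symm]
          · rintro (h | h)
            exacts [hax h.symm, hwx h.symm]
      have hbw : ∀ w, w ≠ a → w ≠ u → suppEdges G x u a b s(b, w) = G.edges s(b, w) := by
        intro w hwa hwu
        by_cases hwx : w = x
        · rw [hwx]
          simp only [suppEdges]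
          rw [if_neg, if_pos (Or.inr (Sym2.mem_iff.mpr (Or.inr rfl))), hxb0]
          intro heq
          rcases Sym2.eq_iff.mp heq with ⟨h, _⟩ | ⟨_, h⟩
          exacts [hab h.symm, hax h.symm]
        · apply gne
          · intro heq
            rcases Sym2.eq_iff.mp heq with ⟨h, _⟩ | ⟨_, h⟩
            exacts [hab h.symm, hwa h]
          · rintro (h | h)
            exacts [hbu h.symm, hwu h.symm]
          · rintro (h | h)
            exacts [hbx h.symm, hwx h.symm]
      have hvw : ∀ v, v ≠ x → v ≠ u → v ≠ a → v ≠ b →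
          ∀ w, w ≠ u → suppEdges G x u a b s(v, w) = G.edges s(v, w) := by
        intro v hvx hvu hva hvb w hwu
        by_cases hwx : w = x
        · rw [hwx]
          have hz : G.edges s(v, x) = 0 := by
            rw [← edges_comm]; exact hxw v hvu
          simp only [suppEdges]
          rw [if_neg, if_pos (Or.inr (Sym2.mem_iff.mpr (Or.inr rfl))), hz]
          intro heq
          rcases Sym2.eq_iff.mp heq with ⟨h, _⟩ | ⟨h, _⟩
          exacts [hva h, hvb h]
        · apply gne
          · intro heq
            rcases Sym2.eq_iff.mp heq with ⟨h, _⟩ | ⟨h, _⟩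
            exacts [hva h, hvb h]
          · rintro (h | h)
            exacts [hvu h.symm, hwu h.symm]
          · rintro (h | h)
            exacts [hvx h.symm, hwx h.symm]
      have lp : ∀ v : V, suppEdges G x u a b s(v, v) = 0 := by
        intro v
        simp only [suppEdges]
        rw [if_neg]
        · split
          · rfl
          · exact G.loopless v
        · intro heq
          rcases Sym2.eq_iff.mp heq with ⟨h1, h2⟩ | ⟨h1, h2⟩
          · exact hab (h1.symm.trans h2)
          · exact hab (h2.symm.trans h1)
      have sp3 : ∀ p q : V, suppEdges G x u a b s(p, q) ≠ 0 →
          p ∈ (G.verts.erase x).erase u := by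
        intro p q hpq
        by_cases hc1 : s(p, q) = s(a, b)
        · rcases Sym2.eq_iff.mp hc1 with ⟨h, _⟩ | ⟨h, _⟩
          · rw [h]
            exact Finset.mem_erase.mpr ⟨hau, Finset.mem_erase.mpr ⟨hax, hav⟩⟩
          · rw [h]
            exact Finset.mem_erase.mpr ⟨hbu, Finset.mem_erase.mpr ⟨hbx, hbv⟩⟩
        · by_cases hc2 : u ∈ s(p, q) ∨ x ∈ s(p, q)
          · exact absurd (by simp only [suppEdges]; rw [if_neg hc1, if_pos hc2]) hpq
          · have hG0 : G.edges s(p, q) ≠ 0 := by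
              intro hz
              exact hpq (by simp only [suppEdges]; rw [if_neg hc1, if_neg hc2]; exact hz)
            refine Finset.mem_erase.mpr ⟨?_, Finset.mem_erase.mpr ⟨?_, mem_left hG0⟩⟩
            · intro h
              exact hc2 (Or.inl (Sym2.mem_iff.mpr (Or.inl h.symm)))
            · intro h
              exact hc2 (Or.inr (Sym2.mem_iff.mpr (Or.inl h.symm)))
      set G₂ : Multigraph V := ⟨G.verts.erase x, delEdges G x u, lp1, sp2⟩ with hG₂def
      set Fn : Multigraph V := ⟨(G.verts.erase x).erase u, suppEdges G x u a b, lp, sp3⟩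
        with hFndef
      have hFnverts : Fn.verts = (G.verts.erase x).erase u := rfl
      have hamem : a ∈ (G.verts.erase x).erase u :=
        Finset.mem_erase.mpr ⟨hau, Finset.mem_erase.mpr ⟨hax, hav⟩⟩
      have hbmem : b ∈ (G.verts.erase x).erase u :=
        Finset.mem_erase.mpr ⟨hbu, Finset.mem_erase.mpr ⟨hbx, hbv⟩⟩
      have hd2u : G₂.degree u = 2 := by
        have e1 : G₂.degree u = ∑ w ∈ G.verts.erase x, G.edges s(u, w) := by
          show ∑ w ∈ G.verts.erase x, delEdges G x u s(u, w) = _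
          apply Finset.sum_congr rfl
          intro w hw
          exact delEdges_ne (fun h => hxu h.1.symm) (fun h => (Finset.mem_erase.mp hw).1 h.2)
        have e2 : G.degree u = G.edges s(u, x) + ∑ w ∈ G.verts.erase x, G.edges s(u, w) := by
          rw [degree_def, sum_split (fun w => G.edges s(u, w)) hxv]
        omega
      have hedges_formula : ∀ e, Fn.edges e =
          if e = s(a, b) then G₂.edges s(a, b) + 1 else if u ∈ e then 0 else G₂.edges e := by
        intro e
        induction e using Sym2.ind with
        | _ p q =>
          show suppEdges G x u a b s(p, q) = _
          by_cases hc1 : s(p, q) = s(a, b)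
          · rw [if_pos hc1, hc1, gab]
            have hz : G₂.edges s(a, b) = 0 := by
              show delEdges G x u s(a, b) = 0
              rw [delEdges_ne (fun h => hax h.1) (fun h => hau h.1)]
              exact htri
            rw [hz]
          · rw [if_neg hc1]
            by_cases hc2 : u ∈ s(p, q)
            · rw [if_pos hc2]
              simp only [suppEdges]
              rw [if_neg hc1, if_pos (Or.inl hc2)]
            · rw [if_neg hc2]
              by_cases hc3 : x ∈ s(p, q)
              · have hg0 : G.edges s(p, q) = 0 := by
                  rcases Sym2.mem_iff.mp hc3 with h | h
                  · rw [h.symm] at hc2 ⊢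
                    exact hxw q (fun hq => hc2 (by rw [hq]; exact Sym2.mem_iff.mpr (Or.inr rfl)))
                  · rw [h.symm] at hc2 ⊢
                    rw [edges_comm]
                    exact hxw p (fun hp => hc2 (by rw [hp]; exact Sym2.mem_iff.mpr (Or.inl rfl)))
                have l : suppEdges G x u a b s(p, q) = 0 := by
                  simp only [suppEdges]
                  rw [if_neg hc1, if_pos (Or.inr hc3)]
                have r : G₂.edges s(p, q) = 0 := by
                  show delEdges G x u s(p, q) = 0
                  simp only [delEdges]
                  split <;> omega
                rw [l, r]
              · have l : suppEdges G x u a b s(p, q) = G.edges s(p, q) := by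
                  simp only [suppEdges]
                  rw [if_neg hc1, if_neg]
                  rintro (h | h)
                  exacts [hc2 h, hc3 h]
                have r : G₂.edges s(p, q) = G.edges s(p, q) := by
                  show delEdges G x u s(p, q) = _
                  simp only [delEdges]
                  rw [if_neg]
                  intro heq
                  rw [heq] at hc3
                  exact hc3 (Sym2.mem_iff.mpr (Or.inl rfl))
                rw [l, r]
      have hda : Fn.degree a = G.degree a := by
        have e1 : Fn.degree a = 1 + ∑ w ∈ ((G.verts.erase x).erase u).erase b, G.edges s(a, w) := by
          show ∑ w ∈ (G.verts.erase x).erase u, suppEdges G x u a b s(a, w) = _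
          rw [sum_split (fun w => suppEdges G x u a b s(a, w)) hbmem, gab]
          congr 1
          apply Finset.sum_congr rfl
          intro w hw
          obtain ⟨hwb, hw2⟩ := Finset.mem_erase.mp hw
          exact haw w hwb (Finset.mem_erase.mp hw2).1
        have e2 : G.degree a = G.edges s(a, x) + (G.edges s(a, u) +
            (G.edges s(a, b) + ∑ w ∈ ((G.verts.erase x).erase u).erase b, G.edges s(a, w))) := by
          rw [degree_def, sum_split (fun w => G.edges s(a, w)) hxv,
            sum_split (fun w => G.edges s(a, w)) huex,
            sum_split (fun w => G.edges s(a, w)) hbmem]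
        have e3 : G.edges s(a, u) = 1 := by rw [← edges_comm]; exact hua1
        omega
      have hdb : Fn.degree b = G.degree b := by
        have e1 : Fn.degree b = 1 + ∑ w ∈ ((G.verts.erase x).erase u).erase a, G.edges s(b, w) := by
          show ∑ w ∈ (G.verts.erase x).erase u, suppEdges G x u a b s(b, w) = _
          rw [sum_split (fun w => suppEdges G x u a b s(b, w)) hamem]
          have hba : suppEdges G x u a b s(b, a) = 1 := by
            rw [Sym2.eq_swap]; exact gab
          rw [hba]
          congr 1
          apply Finset.sum_congr rfl
          intro w hw
          obtain ⟨hwa, hw2⟩ := Finset.mem_erase.mp hw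
          exact hbw w hwa (Finset.mem_erase.mp hw2).1
        have e2 : G.degree b = G.edges s(b, x) + (G.edges s(b, u) +
            (G.edges s(b, a) + ∑ w ∈ ((G.verts.erase x).erase u).erase a, G.edges s(b, w))) := by
          rw [degree_def, sum_split (fun w => G.edges s(b, w)) hxv,
            sum_split (fun w => G.edges s(b, w)) huex,
            sum_split (fun w => G.edges s(b, w)) hamem]
        have e3 : G.edges s(b, u) = 1 := by rw [← edges_comm]; exact hub1
        have e4 : G.edges s(b, a) = 0 := by rw [← edges_comm]; exact htri
        omega
      have hdvv : ∀ v, v ≠ x → v ≠ u → v ≠ a → v ≠ b → Fn.degree v = G.degree v := by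
        intro v hvx hvu hva hvb
        have e1 : Fn.degree v = ∑ w ∈ (G.verts.erase x).erase u, G.edges s(v, w) := by
          show ∑ w ∈ (G.verts.erase x).erase u, suppEdges G x u a b s(v, w) = _
          apply Finset.sum_congr rfl
          intro w hw
          exact hvw v hvx hvu hva hvb w (Finset.mem_erase.mp hw).1
        have e2 : G.degree v = G.edges s(v, x) + (G.edges s(v, u) +
            ∑ w ∈ (G.verts.erase x).erase u, G.edges s(v, w)) := by
          rw [degree_def, sum_split (fun w => G.edges s(v, w)) hxv,
            sum_split (fun w => G.edges s(v, w)) huex]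
        have e3 : G.edges s(v, u) = 0 := by
          rw [← edges_comm]
          exact hN v hvx hva hvb
        have e4 : G.edges s(v, x) = 0 := by
          rw [← edges_comm]
          exact hxw v hvu
        omega
      refine ⟨Fn, Or.inr ⟨u, G₁, G₂, hdeg, hxune, ⟨hxune, rfl, fun e => rfl⟩,
        ⟨⟨hxv, hd1x⟩, rfl, fun e => rfl⟩,
        Or.inr ⟨a, b, hab, ?_, ?_, hd2u, rfl, hedges_formula⟩⟩,
        ⟨?_, ?_, ?_, ?_⟩, ?_⟩
      · show delEdges G x u s(u, a) ≠ 0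
        rw [delEdges_ne (fun h => hxu h.1.symm) (fun h => hax h.2)]
        exact hua0
      · show delEdges G x u s(u, b) ≠ 0
        rw [delEdges_ne (fun h => hxu h.1.symm) (fun h => hbx h.2)]
        exact hub0
      · intro e
        show suppEdges G x u a b e ≤ 1
        simp only [suppEdges]
        split
        · omega
        split
        · omega
        · exact hs e
      · intro S hS hSne
        refine acyclic_suppress hac hab hua0 hub0 S ?_ hSne
        intro v hv
        exact Finset.mem_erase.mpr
          ⟨(Finset.mem_erase.mp (hS hv)).1, Finset.mem_of_mem_erase (Finset.mem_of_mem_erase (hS hv))⟩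
      · apply Set.ext
        intro v
        constructor
        · intro hl
          have h1 : v ∈ (G.verts.erase x).erase u := hl.1
          obtain ⟨hvu, h2⟩ := Finset.mem_erase.mp h1
          obtain ⟨hvx, hvv⟩ := Finset.mem_erase.mp h2
          have hldeg : Fn.degree v ≤ 1 := hl.2
          have hGleaf : G.IsLeaf v := by
            by_cases hva : v = a
            · rw [hva] at hldeg ⊢
              rw [hda] at hldeg
              exact ⟨hav, hldeg⟩
            by_cases hvb : v = b
            · rw [hvb] at hldeg ⊢
              rw [hdb] at hldeg
              exact ⟨hbv, hldeg⟩
            · rw [hdvv v hvx hvu hva hvb] at hldeg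
              exact ⟨hvv, hldeg⟩
          exact Finset.mem_coe.mpr
            (Finset.mem_erase.mpr ⟨hvx, (leaf_iff_mem hG' v).mp hGleaf⟩)
        · intro hv
          obtain ⟨hvx, hvY⟩ := Finset.mem_erase.mp (Finset.mem_coe.mp hv)
          have h2 : G.IsLeaf v := (leaf_iff_mem hG' v).mpr hvY
          have hvu : v ≠ u := by
            intro h
            rw [h] at h2
            have := h2.2
            omega
          refine ⟨Finset.mem_erase.mpr ⟨hvu, Finset.mem_erase.mpr ⟨hvx, h2.1⟩⟩, ?_⟩
          by_cases hva : v = a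
          · rw [hva, hda]
            rw [hva] at h2
            exact h2.2
          by_cases hvb : v = b
          · rw [hvb, hdb]
            rw [hvb] at h2
            exact h2.2
          · rw [hdvv v hvx hvu hva hvb]
            exact h2.2
      · intro v hv
        obtain ⟨hvu, h2⟩ := Finset.mem_erase.mp hv
        obtain ⟨hvx, hvv⟩ := Finset.mem_erase.mp h2
        by_cases hva : v = a
        · rw [hva, hda]; exact hdcond a hav
        by_cases hvb : v = b
        · rw [hvb, hdb]; exact hdcond b hbv
        · rw [hdvv v hvx hvu hva hvb]; exact hdcond v hvv
      · have key : ∀ v ∈ (G.verts.erase x).erase u, Fn.degree v = G.degree v := by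
          intro v hv
          obtain ⟨hvu, h2⟩ := Finset.mem_erase.mp hv
          obtain ⟨hvx, hvv⟩ := Finset.mem_erase.mp h2
          by_cases hva : v = a
          · rw [hva, hda]
          by_cases hvb : v = b
          · rw [hvb, hdb]
          · exact hdvv v hvx hvu hva hvb
        have e1 : Fn.esum = ∑ v ∈ (G.verts.erase x).erase u, G.degree v := by
          rw [esum_def, hFnverts]
          exact Finset.sum_congr rfl key
        have e2 : G.esum = G.degree x + (G.degree u +
            ∑ v ∈ (G.verts.erase x).erase u, G.degree v) := by
          rw [esum_def, sum_split G.degree hxv, sum_split G.degree huex]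
        omega

end Multigraph

end AuxCPS5

section AuxCPS6

variable {V : Type*} [DecidableEq V]

set_option linter.unusedSectionVars false

namespace Multigraph

lemma degree_one_of_cherry {G : Multigraph V} {Y : Finset V} {x y : V}
    (hG : G.IsForest Y) (hx : x ∈ Y) (hch : G.IsCherry x y) : G.degree x = 1 := by
  refine le_antisymm (degree_le_one_of_mem hG hx) ?_
  have hex : ∃ w, G.edges s(x, w) ≠ 0 := by
    rcases hch.2.2.2 with ⟨v, h1, _⟩ | h
    exacts [⟨v, h1⟩, ⟨y, h⟩]
  obtain ⟨w, hw⟩ := hex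
  rw [degree_def]
  exact le_trans (Nat.one_le_iff_ne_zero.mpr hw)
    (Finset.single_le_sum (f := fun w => G.edges s(x, w)) (fun i _ => Nat.zero_le _)
      (mem_right hw))

lemma notC2_of_changed {F F' Fn Fn' : Multigraph V} {x : V}
    (h1 : Fn ≠ F) (h2 : Fn' ≠ F') : ¬ CaseC2 F F' Fn Fn' x := by
  rintro (⟨y, _, hcase⟩ | ⟨y, _, hcase⟩)
  · rcases hcase with ⟨z, _, _, heq, _⟩ | hb | hc
    · exact h2 heq
    · rcases hb.2.2.2 with ⟨heq, _⟩ | ⟨heq, _⟩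
      exacts [h2 heq, h1 heq]
    · exact h2 hc.2.2.2.2.2.1
  · rcases hcase with ⟨z, _, _, heq, _⟩ | hb | hc
    · exact h1 heq
    · rcases hb.2.2.2 with ⟨heq, _⟩ | ⟨heq, _⟩
      exacts [h1 heq, h2 heq]
    · exact h1 hc.2.2.2.2.2.1

lemma notC2_of_isolated {F F' Fn Fn' : Multigraph V} {x : V}
    (h : F.IsIsolated x ∨ F'.IsIsolated x) : ¬ CaseC2 F F' Fn Fn' x := by
  rintro (⟨y, hch, hcase⟩ | ⟨y, hch, hcase⟩)
  · rcases h with hF | hF'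
    · exact not_cherry_of_isolated hF hch
    · rcases hcase with ⟨z, _, hch', _⟩ | hb | hc
      · exact not_cherry_of_isolated hF' hch'
      · exact hch.1 (reach_of_isolated hF' hb.1).symm
      · exact hc.2.1 hF'
  · rcases h with hF | hF'
    · rcases hcase with ⟨z, _, hch', _⟩ | hb | hc
      · exact not_cherry_of_isolated hF hch'
      · exact hch.1 (reach_of_isolated hF hb.1).symm
      · exact hc.2.1 hF
    · exact not_cherry_of_isolated hF' hch

lemma cps_prepend {Y Y' : Finset V} {G G' Fn Fn' : Multigraph V} {x : V}
    (hx : x ∈ Y) (hY' : Y' = Y ∨ Y' = Y.erase x)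
    (hstep : CPStep G G' Fn Fn' x)
    (h : ∃ m xs Fs Fs', IsCPS Y' Fn Fn' m xs Fs Fs') :
    ∃ m xs Fs Fs', IsCPS Y G G' m xs Fs Fs' := by
  obtain ⟨m, xs, Fs, Fs', h1, h2, h3, h4, h5, h6, h7, h8⟩ := h
  refine ⟨m + 1, fun i => if i = 0 then x else xs (i - 1),
    fun i => if i = 0 then G else Fs (i - 1),
    fun i => if i = 0 then G' else Fs' (i - 1), ?_, ?_, ?_, ?_, ?_, ?_, ?_, ?_⟩
  · omega
  · rcases hY' with rfl | heq
    · omega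
    · have hc := Finset.card_erase_of_mem hx
      rw [heq] at h2
      have hpos : 1 ≤ Y.card := Finset.card_pos.mpr ⟨x, hx⟩
      omega
  · intro i hi
    dsimp only
    by_cases h0 : i = 0
    · rw [if_pos h0]; exact hx
    · rw [if_neg h0]
      have hmem : xs (i - 1) ∈ Y' := h3 (i - 1) (by omega)
      rcases hY' with rfl | heq
      · exact hmem
      · rw [heq] at hmem
        exact Finset.mem_of_mem_erase hmem
  · simp
  · simp
  · simp only [Nat.add_sub_cancel]
    rw [if_neg (by omega), if_neg (by omega)]
    exact h6
  · simp only [Nat.add_sub_cancel]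
    rw [if_neg (by omega), if_neg (by omega)]
    exact h7
  · intro i hi
    by_cases h0 : i = 0
    · subst h0
      simpa [h4, h5] using hstep
    · have := h8 (i - 1) (by omega)
      have heq : i - 1 + 1 = i := by omega
      rw [heq] at this
      simpa [if_neg h0, Nat.succ_ne_zero] using this

lemma cps_base {Y : Finset V} {G G' : Multigraph V} {x : V} (hY : Y = {x})
    (hG : G.IsForest Y) (hG' : G'.IsForest Y) :
    ∃ m xs Fs Fs', IsCPS Y G G' m xs Fs Fs' := by
  subst hY
  exact ⟨1, fun _ => x, fun _ => G, fun _ => G', le_refl 1, by simp, fun i _ => by simp,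
    rfl, rfl, forest_singleton hG, forest_singleton hG', fun i hi => absurd hi (by omega)⟩

lemma cps_main : ∀ n : ℕ, ∀ (Y : Finset V) (G G' : Multigraph V), Y.Nonempty →
    G.IsForest Y → G'.IsForest Y → 3 * Y.card + G.esum + G'.esum ≤ n →
    ∃ m xs Fs Fs', IsCPS Y G G' m xs Fs Fs' := by
  intro n
  induction n with
  | zero =>
    intro Y G G' hY _ _ hn
    have := Finset.card_pos.mpr hY
    omega
  | succ n ih =>
    intro Y G G' hY hG hG' hn
    by_cases hone : Y.card = 1
    · obtain ⟨x, hx⟩ := Finset.card_eq_one.mp hone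
      exact cps_base hx (hx ▸ hG) (hx ▸ hG')
    have hcard2 : 2 ≤ Y.card := by
      have := Finset.card_pos.mpr hY
      omega
    by_cases hiso : ∃ x ∈ Y, G.IsIsolated x ∨ G'.IsIsolated x
    · -- (C3)
      obtain ⟨x, hxY, hxiso⟩ := hiso
      obtain ⟨Fn, hrem, hFn, hes⟩ := removeLeaf_exists hG hxY
      obtain ⟨Fn', hrem', hFn', hes'⟩ := removeLeaf_exists hG' hxY
      have hstep : CPStep G G' Fn Fn' x := by
        right; right
        refine ⟨?_, notC2_of_isolated hxiso, ⟨hxiso, hrem, hrem'⟩⟩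
        rintro ⟨y, hchG, hchG', _, _⟩
        rcases hxiso with hi | hi
        exacts [not_cherry_of_isolated hi hchG, not_cherry_of_isolated hi hchG']
      apply cps_prepend hxY (Or.inr rfl) hstep
      apply ih
      · rw [← Finset.card_pos, Finset.card_erase_of_mem hxY]; omega
      · exact hFn
      · exact hFn'
      · have hc := Finset.card_erase_of_mem hxY
        omega
    · push_neg at hiso
      obtain ⟨x₀, y₀, hch, hx₀, hy₀⟩ := cherry_exists hG hY (fun v hv => (hiso v hv).1)
      have hdx₀ : G.degree x₀ = 1 := degree_one_of_cherry hG hx₀ hch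
      have hdy₀ : G.degree y₀ = 1 := degree_one_of_cherry hG hy₀ (cherry_symm hch)
      by_cases hc1 : G'.IsCherry x₀ y₀
      · -- (C1)
        obtain ⟨Fn, hrem, hFn, hes⟩ := removeLeaf_exists hG hx₀
        obtain ⟨Fn', hrem', hFn', hes'⟩ := removeLeaf_exists hG' hx₀
        have hstep : CPStep G G' Fn Fn' x₀ := by
          left
          refine ⟨⟨y₀, hch, hc1, hrem, hrem'⟩, ?_, ?_⟩
          · apply notC2_of_changed
            · intro he
              exact (removedLeaf_verts hrem).2 (by rw [he]; exact (removedLeaf_verts hrem).1)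
            · intro he
              exact (removedLeaf_verts hrem').2 (by rw [he]; exact (removedLeaf_verts hrem').1)
          · rintro ⟨hisoC, _, _⟩
            rcases hisoC with hi | hi
            exacts [cherry_not_isolated hch hi, cherry_not_isolated hc1 hi]
        apply cps_prepend hx₀ (Or.inr rfl) hstep
        apply ih
        · rw [← Finset.card_pos, Finset.card_erase_of_mem hx₀]; omega
        · exact hFn
        · exact hFn'
        · have hc := Finset.card_erase_of_mem hx₀
          omega
      · -- (C2)
        have notC1 : ∀ Fn : Multigraph V, ∀ z : V, z ∈ Y → ¬ CaseC1 G G' Fn G' z := by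
          rintro Fn z hz ⟨y, _, _, _, hre⟩
          exact not_removedLeaf_self (mem_verts_of_mem hG' hz) hre
        have notC3 : ∀ Fn : Multigraph V, ∀ z : V, z ∈ Y → ¬ CaseC3 G G' Fn G' z := by
          rintro Fn z hz ⟨_, _, hre⟩
          exact not_removedLeaf_self (mem_verts_of_mem hG' hz) hre
        by_cases hc2a : ∃ z, G'.IsCherry x₀ z
        · -- (C2)(a) with x₀
          obtain ⟨z, hz⟩ := hc2a
          have hzy : z ≠ y₀ := fun h => hc1 (h ▸ hz)
          obtain ⟨Fn, hrem, hFn, hisoFn, hes⟩ := removePendant_exists hG hx₀ hdx₀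
          have hstep : CPStep G G' Fn G' x₀ := by
            right; left
            exact ⟨notC1 Fn x₀ hx₀,
              Or.inl ⟨y₀, hch, Or.inl ⟨z, hzy, hz, rfl, Or.inl hrem⟩⟩,
              notC3 Fn x₀ hx₀⟩
          apply cps_prepend hx₀ (Or.inl rfl) hstep
          apply ih Y Fn G' hY hFn hG'
          omega
        by_cases hc2a' : ∃ z, G'.IsCherry y₀ z
        · -- (C2)(a) with y₀
          obtain ⟨z, hz⟩ := hc2a'
          have hzx : z ≠ x₀ := fun h => hc1 (cherry_symm (h ▸ hz))
          obtain ⟨Fn, hrem, hFn, hisoFn, hes⟩ := removePendant_exists hG hy₀ hdy₀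
          have hstep : CPStep G G' Fn G' y₀ := by
            right; left
            exact ⟨notC1 Fn y₀ hy₀,
              Or.inl ⟨x₀, cherry_symm hch, Or.inl ⟨z, hzx, hz, rfl, Or.inl hrem⟩⟩,
              notC3 Fn y₀ hy₀⟩
          apply cps_prepend hy₀ (Or.inl rfl) hstep
          apply ih Y Fn G' hY hFn hG'
          omega
        · -- x₀, y₀ in no cherry of G'
          have hnx : ¬ G'.InACherry x₀ := hc2a
          have hny : ¬ G'.InACherry y₀ := hc2a'
          obtain ⟨Fn, hrem, hFn, hisoFn, hes⟩ := removePendant_exists hG hx₀ hdx₀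
          by_cases hreach : G'.Reach x₀ y₀
          · -- (C2)(b)
            have hstep : CPStep G G' Fn G' x₀ := by
              right; left
              exact ⟨notC1 Fn x₀ hx₀,
                Or.inl ⟨y₀, hch, Or.inr (Or.inl ⟨hreach, hnx, hny, Or.inl ⟨rfl, Or.inl hrem⟩⟩)⟩,
                notC3 Fn x₀ hx₀⟩
            apply cps_prepend hx₀ (Or.inl rfl) hstep
            apply ih Y Fn G' hY hFn hG'
            omega
          · -- (C2)(c)
            have hstep : CPStep G G' Fn G' x₀ := by
              right; left
              exact ⟨notC1 Fn x₀ hx₀,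
                Or.inl ⟨y₀, hch, Or.inr (Or.inr ⟨hreach, (hiso x₀ hx₀).2, (hiso y₀ hy₀).2,
                  hnx, hny, rfl, Or.inl hrem⟩)⟩,
                notC3 Fn x₀ hx₀⟩
            apply cps_prepend hx₀ (Or.inl rfl) hstep
            apply ih Y Fn G' hY hFn hG'
            omega

end Multigraph

end AuxCPS6

open Multigraph in
/-- Proposition 3.2: for any two forests `F`, `F'` on `X`, there exists
a cherry picking sequence for `F` and `F'` of length `m` for some `m ≥ |X|`. -/
theorem cps_exists {V : Type*} [DecidableEq V] [Infinite V]
    (X : Finset V) (hX : X.Nonempty) (F F' : Multigraph V)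
    (hF : F.IsForest X) (hF' : F'.IsForest X) :
    ∃ (m : ℕ) (xs : ℕ → V) (Fs Fs' : ℕ → Multigraph V),
      X.card ≤ m ∧ IsCPS X F F' m xs Fs Fs' := by
  obtain ⟨m, xs, Fs, Fs', hcps⟩ :=
    cps_main (3 * X.card + F.esum + F'.esum) X F F' hX hF hF' (le_refl _)
  exact ⟨m, xs, Fs, Fs', hcps.2.1, hcps⟩
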